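/- arXiv:2510.08861 — 9 statements merged into one kernel-verified Lean document; each statement's English description precedes it below -/
import Mathlib

section
/- A functor F : A ⥤ B between categories is initial if and only if it is strictly left orthogonal to every discrete opfibration of categories; that is, F is initial if and only if for every discrete opfibration p : E ⥤ X and all functors t : A ⥤ E and s : B ⥤ X with F ⋙ s = t ⋙ p, there exists a unique functor d : B ⥤ E with F ⋙ d = t and d ⋙ p = s. -/
open CategoryTheory

universe u

/-- A functor `p : E ⥤ B` is a discrete opfibration if every morphism out of the image of an
object `e` has a unique lift with domain `e`. -/
def IsDiscreteOpfib {E : Type*} {B : Type*} [Category E] [Category B] (p : E ⥤ B) : Prop :=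
  ∀ ⦃e : E⦄ ⦃b : B⦄ (f : p.obj e ⟶ b),
    ∃! eg : Σ e' : E, e ⟶ e',
      ∃ h : p.obj eg.1 = b, p.map eg.2 ≫ eqToHom h = f

namespace DOpf

variable {E X : Type*} [Category E] [Category X] {p : E ⥤ X} (hp : IsDiscreteOpfib p)

noncomputable def lobj {e : E} {x : X} (f : p.obj e ⟶ x) : E :=
  (hp f).exists.choose.1

noncomputable def lmap {e : E} {x : X} (f : p.obj e ⟶ x) : e ⟶ lobj hp f :=
  (hp f).exists.choose.2

lemma lobj_eq {e : E} {x : X} (f : p.obj e ⟶ x) : p.obj (lobj hp f) = x :=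
  (hp f).exists.choose_spec.choose

lemma lmap_comm {e : E} {x : X} (f : p.obj e ⟶ x) :
    p.map (lmap hp f) ≫ eqToHom (lobj_eq hp f) = f :=
  (hp f).exists.choose_spec.choose_spec

lemma lift_eq {e : E} {x : X} (f : p.obj e ⟶ x) {e' : E} (g : e ⟶ e')
    (h : p.obj e' = x) (hc : p.map g ≫ eqToHom h = f) :
    ∃ he : lobj hp f = e', lmap hp f ≫ eqToHom he = g := by
  obtain ⟨w, hw, huniq⟩ := hp f
  have h1 : (⟨e', g⟩ : Σ e'', e ⟶ e'') = w := huniq _ ⟨h, hc⟩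
  have h2 : (⟨lobj hp f, lmap hp f⟩ : Σ e'', e ⟶ e'') = w :=
    huniq _ ⟨lobj_eq hp f, lmap_comm hp f⟩
  have h3 := h2.trans h1.symm
  obtain ⟨he, hm⟩ := Sigma.mk.inj_iff.mp h3
  refine ⟨he, ?_⟩
  have h4 := (conj_eqToHom_iff_heq (lmap hp f) g rfl he).mpr hm
  simp only [eqToHom_refl, Category.id_comp] at h4
  rw [h4]
  simp

section Forward

variable {A B : Type*} [Category A] [Category B] {F : A ⥤ B} [F.Initial]
variable {E X : Type*} [Category E] [Category X] {p : E ⥤ X} (hp : IsDiscreteOpfib p)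
variable {t : A ⥤ E} {s : B ⥤ X} (hsq : F ⋙ s = t ⋙ p)

/-- the comparison morphism `p (t a) ⟶ s b` associated to `u : F a ⟶ b`. -/
def phi {a : A} {b : B} (u : F.obj a ⟶ b) : p.obj (t.obj a) ⟶ s.obj b :=
  eqToHom (Functor.congr_obj hsq a).symm ≫ s.map u

noncomputable def Phi {b : B} (j : CostructuredArrow F b) : E :=
  lobj hp (phi hsq j.hom)

lemma Phi_const {b : B} (j j' : CostructuredArrow F b) : Phi hp hsq j = Phi hp hsq j' := by
  apply constant_of_preserves_morphisms (fun j => Phi hp hsq j)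
  intro j₁ j₂ k
  have hw : F.map k.left ≫ j₂.hom = j₁.hom := CostructuredArrow.w k
  have hphi : phi hsq j₁.hom = p.map (t.map k.left) ≫ phi hsq j₂.hom := by
    rw [← hw]
    unfold phi
    have hsk : s.map (F.map k.left)
        = eqToHom (Functor.congr_obj hsq j₁.left) ≫ p.map (t.map k.left)
            ≫ eqToHom (Functor.congr_obj hsq j₂.left).symm :=
      Functor.congr_hom hsq k.left
    rw [s.map_comp, hsk]
    simp
  show lobj hp (phi hsq j₁.hom) = lobj hp (phi hsq j₂.hom)
  rw [hphi]
  obtain ⟨he, -⟩ := lift_eq hp (p.map (t.map k.left) ≫ phi hsq j₂.hom)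
    (t.map k.left ≫ lmap hp (phi hsq j₂.hom)) (lobj_eq hp _)
    (by rw [p.map_comp, Category.assoc, lmap_comm])
  exact he

noncomputable def dobj (b : B) : E :=
  Phi hp hsq (Classical.arbitrary (CostructuredArrow F b))

lemma Phi_eq_dobj {b : B} (j : CostructuredArrow F b) : Phi hp hsq j = dobj hp hsq b :=
  Phi_const hp hsq j _

lemma pd (b : B) : p.obj (dobj hp hsq b) = s.obj b :=
  lobj_eq hp _

/-- the morphism to lift for `d.map f`. -/
noncomputable def psi {b b' : B} (f : b ⟶ b') : p.obj (dobj hp hsq b) ⟶ s.obj b' :=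
  eqToHom (pd hp hsq b) ≫ s.map f

lemma dkey {b b' : B} (f : b ⟶ b') : lobj hp (psi hp hsq f) = dobj hp hsq b' := by
  set j₀ := Classical.arbitrary (CostructuredArrow F b) with hj₀
  have hcomp : p.map (lmap hp (phi hsq j₀.hom)) ≫ psi hp hsq f
      = phi hsq ((CostructuredArrow.mk (j₀.hom ≫ f)).hom) := by
    show p.map (lmap hp (phi hsq j₀.hom)) ≫ eqToHom (pd hp hsq b) ≫ s.map f = _
    have : p.map (lmap hp (phi hsq j₀.hom)) ≫ eqToHom (pd hp hsq b) = phi hsq j₀.hom :=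
      lmap_comm hp _
    rw [← Category.assoc, this]
    unfold phi
    simp
  obtain ⟨he, -⟩ := lift_eq hp (p.map (lmap hp (phi hsq j₀.hom)) ≫ psi hp hsq f)
    (lmap hp (phi hsq j₀.hom) ≫ lmap hp (psi hp hsq f)) (lobj_eq hp _)
    (by erw [p.map_comp, Category.assoc, lmap_comm])
  rw [hcomp] at he
  exact he.symm.trans (Phi_eq_dobj hp hsq _)

noncomputable def dmap {b b' : B} (f : b ⟶ b') : dobj hp hsq b ⟶ dobj hp hsq b' :=
  lmap hp (psi hp hsq f) ≫ eqToHom (dkey hp hsq f)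

lemma dmap_comm {b b' : B} (f : b ⟶ b') :
    p.map (dmap hp hsq f) ≫ eqToHom (pd hp hsq b') = psi hp hsq f := by
  unfold dmap
  rw [p.map_comp, eqToHom_map, Category.assoc, eqToHom_trans]
  exact lmap_comm hp _

noncomputable def dFun : B ⥤ E where
  obj := dobj hp hsq
  map := dmap hp hsq
  map_id b := by
    obtain ⟨he, hm⟩ := lift_eq hp (psi hp hsq (𝟙 b)) (𝟙 (dobj hp hsq b)) (pd hp hsq b)
      (by unfold psi; simp)
    show lmap hp (psi hp hsq (𝟙 b)) ≫ eqToHom (dkey hp hsq (𝟙 b)) = 𝟙 _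
    exact hm
  map_comp {b b' b''} f g := by
    obtain ⟨he, hm⟩ := lift_eq hp (psi hp hsq (f ≫ g)) (dmap hp hsq f ≫ dmap hp hsq g)
      (pd hp hsq b'')
      (by
        have hf := dmap_comm hp hsq f
        have hg := dmap_comm hp hsq g
        unfold psi at hf hg ⊢
        rw [p.map_comp, Category.assoc, hg, ← Category.assoc, hf]
        simp)
    show lmap hp (psi hp hsq (f ≫ g)) ≫ eqToHom (dkey hp hsq (f ≫ g)) = _
    exact hm

lemma dFun_obj_comp (a : A) : dobj hp hsq (F.obj a) = t.obj a := by
  have h1 : Phi hp hsq (CostructuredArrow.mk (𝟙 (F.obj a))) = dobj hp hsq (F.obj a) :=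
    Phi_eq_dobj hp hsq _
  obtain ⟨he, -⟩ := lift_eq hp (phi hsq (CostructuredArrow.mk (𝟙 (F.obj a))).hom)
    (𝟙 (t.obj a)) (Functor.congr_obj hsq a).symm
    (by unfold phi; simp)
  exact h1.symm.trans he

lemma dFun_comp_eq : F ⋙ dFun hp hsq = t := by
  refine CategoryTheory.Functor.ext (F := F ⋙ dFun hp hsq) (G := t) (fun a => dFun_obj_comp hp hsq a) ?_
  intro a a' k
  show dmap hp hsq (F.map k) = _
  obtain ⟨he, hm⟩ := lift_eq hp (psi hp hsq (F.map k))
    (eqToHom (dFun_obj_comp hp hsq a) ≫ t.map k) (Functor.congr_obj hsq a').symm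
    (by
      have hsk : s.map (F.map k)
          = eqToHom (Functor.congr_obj hsq a) ≫ p.map (t.map k)
              ≫ eqToHom (Functor.congr_obj hsq a').symm :=
        Functor.congr_hom hsq k
      unfold psi
      rw [hsk, p.map_comp, eqToHom_map]
      simp)
  unfold dmap
  have hk : eqToHom (dkey hp hsq (F.map k))
      = eqToHom he ≫ eqToHom (dFun_obj_comp hp hsq a').symm := by
    rw [eqToHom_trans]
  rw [hk, ← Category.assoc, hm]
  simp
  rfl

lemma dFun_proj_eq : dFun hp hsq ⋙ p = s := by
  refine CategoryTheory.Functor.ext (F := dFun hp hsq ⋙ p) (G := s) (fun b => pd hp hsq b) ?_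
  intro b b' f
  show p.map (dmap hp hsq f) = eqToHom (pd hp hsq b) ≫ s.map f ≫ eqToHom (pd hp hsq b').symm
  have hcm := dmap_comm hp hsq f
  unfold psi at hcm
  rw [← Category.assoc, ← hcm]
  simp

lemma dFun_unique (d' : B ⥤ E) (h1 : F ⋙ d' = t) (h2 : d' ⋙ p = s) : d' = dFun hp hsq := by
  have hobj : ∀ b, d'.obj b = dobj hp hsq b := by
    intro b
    set j₀ := Classical.arbitrary (CostructuredArrow F b) with hj₀
    have e : t.obj j₀.left = d'.obj (F.obj j₀.left) := (Functor.congr_obj h1 j₀.left).symm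
    obtain ⟨he, -⟩ := lift_eq hp (phi hsq j₀.hom) (eqToHom e ≫ d'.map j₀.hom)
      (Functor.congr_obj h2 b)
      (by
        have hpk : p.map (d'.map j₀.hom)
            = eqToHom (Functor.congr_obj h2 (F.obj j₀.left)) ≫ s.map j₀.hom
                ≫ eqToHom (Functor.congr_obj h2 b).symm :=
          Functor.congr_hom h2 j₀.hom
        rw [p.map_comp, hpk, eqToHom_map]
        unfold phi
        simp)
    have : dobj hp hsq b = d'.obj b := he
    exact this.symm
  refine CategoryTheory.Functor.ext (F := d') (G := dFun hp hsq) (fun b => hobj b) ?_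
  intro b b' f
  obtain ⟨he, hm⟩ := lift_eq hp (psi hp hsq f) (eqToHom (hobj b).symm ≫ d'.map f)
    (Functor.congr_obj h2 b')
    (by
      have hpk : p.map (d'.map f)
          = eqToHom (Functor.congr_obj h2 b) ≫ s.map f
              ≫ eqToHom (Functor.congr_obj h2 b').symm :=
        Functor.congr_hom h2 f
      rw [p.map_comp, hpk, eqToHom_map]
      unfold psi
      simp)
  have hd : dmap hp hsq f = lmap hp (psi hp hsq f) ≫ eqToHom (dkey hp hsq f) := rfl
  have hk : eqToHom (dkey hp hsq f) = eqToHom he ≫ eqToHom (hobj b') := by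
    rw [eqToHom_trans]
  have hthis : dmap hp hsq f = (eqToHom (hobj b).symm ≫ d'.map f) ≫ eqToHom (hobj b') := by
    rw [hd, hk, ← Category.assoc, hm]
  show d'.map f = eqToHom (hobj b) ≫ dmap hp hsq f ≫ eqToHom (hobj b').symm
  rw [hthis]
  simp

end Forward

end DOpf

section Reverse

open DOpf

variable {A B : Type u} [Category.{u} A] [Category.{u} B] (F : A ⥤ B)

/-- objects of the costructured arrow category, as a sigma type. -/
abbrev Arr (b : B) := Σ a : A, F.obj a ⟶ b

def rel (b : B) (x y : Arr F b) : Prop :=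
  ∃ k : x.1 ⟶ y.1, F.map k ≫ y.2 = x.2

/-- The functor of "connected components of costructured arrows". -/
def Gfun : B ⥤ Type u where
  obj b := Quot (rel F b)
  map {b b'} f := TypeCat.ofHom (Quot.lift (fun x : Arr F b => Quot.mk (rel F b') ⟨x.1, x.2 ≫ f⟩)
    (by
      rintro ⟨a, u⟩ ⟨a', u'⟩ ⟨k, hk⟩
      exact Quot.sound ⟨k, by rw [← Category.assoc, hk]⟩))
  map_id b := by
    ext q
    induction q using Quot.ind with
    | _ x => simp
  map_comp {b b' b''} f g := by
    ext q
    induction q using Quot.ind with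
    | _ x => simp

lemma sigma_hom_ext {C : Type*} [Category C] {G : C ⥤ Type u} {e : G.Elements}
    (x y : Σ e' : G.Elements, e ⟶ e') (h1 : x.1 = y.1)
    (h2 : x.2.val ≫ eqToHom (congrArg Sigma.fst h1) = y.2.val) : x = y := by
  obtain ⟨x1, x2⟩ := x
  obtain ⟨y1, y2⟩ := y
  dsimp at h1
  subst h1
  simp only [eqToHom_refl, Category.comp_id] at h2
  rw [Subtype.ext h2]

lemma pi_opfib {C : Type*} [Category C] (G : C ⥤ Type u) :
    IsDiscreteOpfib (CategoryOfElements.π G) := by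
  intro e b f
  refine ⟨⟨⟨b, G.map f e.2⟩, ⟨f, rfl⟩⟩, ⟨rfl, Category.comp_id _⟩, ?_⟩
  intro w hw
  obtain ⟨h, hc⟩ := hw
  have h1 : w.1 = (⟨b, G.map f e.2⟩ : G.Elements) := by
    have hb : w.1.1 = b := h
    apply Functor.Elements.ext w.1 (⟨b, G.map f e.2⟩ : G.Elements) hb
    rw [← w.2.2, ← FunctorToTypes.map_comp_apply,
      show w.2.val ≫ eqToHom hb = f from hc]
    rfl
  exact sigma_hom_ext w ⟨⟨b, G.map f e.2⟩, ⟨f, rfl⟩⟩ h1 hc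

/-- the canonical lift of `F`. -/
def tFun : A ⥤ (Gfun F).Elements where
  obj a := ⟨F.obj a, Quot.mk _ ⟨a, 𝟙 (F.obj a)⟩⟩
  map {a a'} k := ⟨F.map k, Quot.sound ⟨k, by simp⟩⟩
  map_id a := by apply Subtype.ext; simp; rfl
  map_comp {a a' a''} k l := by apply Subtype.ext; simp; rfl

lemma cast_elem {C : Type*} [Category C] (G : C ⥤ Type u) {z w : G.Elements} (h : z = w)
    {c : C} (hz : z.1 = c) (hw : w.1 = c) :
    G.map (eqToHom hz) z.2 = G.map (eqToHom hw) w.2 := by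
  subst h; rfl

lemma initial_of_lift
    (d : B ⥤ (Gfun F).Elements)
    (hd1 : F ⋙ d = tFun F) (hd2 : d ⋙ CategoryOfElements.π (Gfun F) = 𝟭 B) :
    F.Initial := by
  have hB : ∀ b : B, (d.obj b).1 = b := fun b => Functor.congr_obj hd2 b
  let c : ∀ b : B, (Gfun F).obj b := fun b => (Gfun F).map (eqToHom (hB b)) (d.obj b).2
  have hnat : ∀ {b b' : B} (u : b ⟶ b'), (Gfun F).map u (c b) = c b' := by
    intro b b' u
    have hmor : (Gfun F).map (d.map u).val (d.obj b).2 = (d.obj b').2 := (d.map u).2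
    have hval : (d.map u).val = eqToHom (hB b) ≫ u ≫ eqToHom (hB b').symm :=
      Functor.congr_hom hd2 u
    show (Gfun F).map u ((Gfun F).map (eqToHom (hB b)) (d.obj b).2)
      = (Gfun F).map (eqToHom (hB b')) (d.obj b').2
    rw [← hmor, hval]
    rw [← FunctorToTypes.map_comp_apply, ← FunctorToTypes.map_comp_apply]
    simp
  have hFa : ∀ a : A, c (F.obj a) = Quot.mk (rel F (F.obj a)) ⟨a, 𝟙 (F.obj a)⟩ := by
    intro a
    have e : d.obj (F.obj a) = (tFun F).obj a := Functor.congr_obj hd1 a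
    have hce := cast_elem (Gfun F) e (hB (F.obj a)) (rfl : ((tFun F).obj a).1 = F.obj a)
    show (Gfun F).map (eqToHom (hB (F.obj a))) (d.obj (F.obj a)).2 = _
    rw [hce]
    show (Gfun F).map (eqToHom rfl) (Quot.mk (rel F (F.obj a)) ⟨a, 𝟙 (F.obj a)⟩) = _
    simp
    rfl
  have hall : ∀ {b : B} (a : A) (u : F.obj a ⟶ b), Quot.mk (rel F b) ⟨a, u⟩ = c b := by
    intro b a u
    rw [← hnat u, hFa a]
    show Quot.mk (rel F b) ⟨a, u⟩ = Quot.mk (rel F b) (⟨a, 𝟙 (F.obj a) ≫ u⟩ : Arr F b)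
    rw [Category.id_comp]
  constructor
  intro b
  obtain ⟨⟨a0, u0⟩, -⟩ := Quot.exists_rep (c b)
  have hne : Nonempty (CostructuredArrow F b) := ⟨CostructuredArrow.mk u0⟩
  apply zigzag_isConnected
  intro j₁ j₂
  have h1 : Quot.mk (rel F b) ⟨j₁.left, j₁.hom⟩ = c b := hall j₁.left j₁.hom
  have h2 : Quot.mk (rel F b) ⟨j₂.left, j₂.hom⟩ = c b := hall j₂.left j₂.hom
  have hq : Quot.mk (rel F b) ⟨j₁.left, j₁.hom⟩ = Quot.mk (rel F b) ⟨j₂.left, j₂.hom⟩ :=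
    h1.trans h2.symm
  have heqv := Quot.eq.mp hq
  have hz : ∀ (x y : Arr F b), Relation.EqvGen (rel F b) x y →
      Zigzag (CostructuredArrow.mk x.2) (CostructuredArrow.mk y.2) := by
    intro x y h
    induction h with
    | rel x y hxy =>
        obtain ⟨k, hk⟩ := hxy
        refine Relation.ReflTransGen.single
          (show Zag (CostructuredArrow.mk x.2) (CostructuredArrow.mk y.2) from
            Or.inl ⟨CostructuredArrow.homMk k ?_⟩)
        simpa using hk
    | refl x => exact Relation.ReflTransGen.refl
    | symm x y h ih => exact zigzag_symmetric.symm _ _ ih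
    | trans x y z h1 h2 ih1 ih2 => exact ih1.trans ih2
  have hzz := hz _ _ heqv
  rw [CostructuredArrow.eq_mk j₁, CostructuredArrow.eq_mk j₂]
  exact hzz

end Reverse

/-- A functor is initial if and only if it is strictly left orthogonal to every discrete
opfibration of categories. -/
theorem initial_iff_strictly_left_orthogonal_to_discrete_opfibrations
    {A B : Type u} [Category.{u} A] [Category.{u} B] (F : A ⥤ B) :
    F.Initial ↔
      ∀ (E X : Type u) [Category.{u} E] [Category.{u} X] (p : E ⥤ X),
        IsDiscreteOpfib p →
          ∀ (t : A ⥤ E) (s : B ⥤ X), F ⋙ s = t ⋙ p →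
            ∃! d : B ⥤ E, F ⋙ d = t ∧ d ⋙ p = s := by
  constructor
  · intro hF E X _ _ p hp t s hsq
    exact ⟨DOpf.dFun hp hsq, ⟨DOpf.dFun_comp_eq hp hsq, DOpf.dFun_proj_eq hp hsq⟩,
      fun d' h => DOpf.dFun_unique hp hsq d' h.1 h.2⟩
  · intro H
    obtain ⟨d, ⟨hd1, hd2⟩, -⟩ := H (Gfun F).Elements B (CategoryOfElements.π (Gfun F))
      (pi_opfib _) (tFun F) (𝟭 B) rfl
    exact initial_of_lift F d hd1 hd2
end

section
/- Every functor F : A ⥤ B between categories admits a comprehensive factorization: there exist a category E, an initial functor I : A ⥤ E, and a discrete opfibration P : E ⥤ B such that I ⋙ P = F. -/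
open CategoryTheory

universe u

section Aux

variable {A B : Type u} [Category.{u} A] [Category.{u} B] (F : A ⥤ B)

/-- The functor sending `b` to the set of connected components of `F/b`. -/
def CFfunctor : B ⥤ Type u where
  obj b := ConnectedComponents (CostructuredArrow F b)
  map f := TypeCat.ofHom (CostructuredArrow.map f).mapConnectedComponents
  map_id b := by
    ext x
    induction x using Quotient.inductionOn with
    | h z => exact congrArg (Quotient.mk _) CostructuredArrow.map_id
  map_comp f g := by
    ext x
    induction x using Quotient.inductionOn with
    | h z => exact congrArg (Quotient.mk _) CostructuredArrow.map_comp

/-- The projection from a category of elements is a discrete opfibration. -/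
theorem isDiscreteOpfib_pi (G : B ⥤ Type u) :
    IsDiscreteOpfib (CategoryOfElements.π G) := by
  intro e b f
  refine ⟨⟨⟨b, G.map f e.2⟩, ⟨f, rfl⟩⟩, ⟨rfl, by simp [CategoryOfElements.π]; exact Category.comp_id f⟩, ?_⟩
  rintro ⟨⟨b', y⟩, g⟩ ⟨h, hg⟩
  dsimp [CategoryOfElements.π] at h hg
  subst h
  rw [eqToHom_refl, Category.comp_id] at hg
  have hg' : g.val = f := hg
  have hy : y = G.map f e.2 := by rw [← hg']; exact g.property.symm
  subst hy
  exact Sigma.ext rfl (heq_of_eq (Subtype.ext hg'))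

/-- The initial part of the comprehensive factorization. -/
def toElements : A ⥤ (CFfunctor F).Elements where
  obj a := ⟨F.obj a, Quotient.mk _ (CostructuredArrow.mk (𝟙 (F.obj a)))⟩
  map {a a'} φ := ⟨F.map φ, by
    show Quotient.mk _ ((CostructuredArrow.map (F.map φ)).obj
        (CostructuredArrow.mk (𝟙 (F.obj a)))) =
      Quotient.mk _ (CostructuredArrow.mk (𝟙 (F.obj a')))
    rw [CostructuredArrow.map_mk, Category.id_comp]
    exact Quotient.sound (Relation.ReflTransGen.single
      (Or.inl ⟨CostructuredArrow.homMk φ (by simp)⟩))⟩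
  map_id a := Subtype.ext (F.map_id a)
  map_comp f g := Subtype.ext (F.map_comp f g)

variable {F}

variable (b : B) (x : ConnectedComponents (CostructuredArrow F b))

instance instCatCAElts (c : Σ b : B, (CFfunctor F).obj b) :
    Category.{u} (CostructuredArrow (toElements F) c) :=
  instCategoryCostructuredArrow_1 (toElements F) c

/-- Lift an object of `F/b` lying in component `x` to the costructured-arrow category of
`toElements F` over `(b, x)`. -/
def liftObj (z : CostructuredArrow F b) (hz : Quotient.mk _ z = x) :
    CostructuredArrow (toElements F) (⟨b, x⟩ : (CFfunctor F).Elements) :=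
  CostructuredArrow.mk (Y := z.left) (⟨z.hom, by
    show Quotient.mk _ ((CostructuredArrow.map z.hom).obj
        (CostructuredArrow.mk (𝟙 (F.obj z.left)))) = x
    rw [CostructuredArrow.map_mk, Category.id_comp, ← CostructuredArrow.eq_mk]
    exact hz⟩ : (toElements F).obj z.left ⟶ ⟨b, x⟩)

/-- Lift a morphism of `F/b` to the costructured-arrow category of `toElements F`. -/
def liftHom {z₁ z₂ : CostructuredArrow F b} (h : z₁ ⟶ z₂)
    (hz₁ : Quotient.mk _ z₁ = x) (hz₂ : Quotient.mk _ z₂ = x) :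
    liftObj b x z₁ hz₁ ⟶ liftObj b x z₂ hz₂ :=
  CostructuredArrow.homMk h.left (Subtype.ext (by
    exact CostructuredArrow.w h))

theorem zigzag_lift {z₁ z₂ : CostructuredArrow F b} (h : Zigzag z₁ z₂)
    (hz₁ : Quotient.mk _ z₁ = x) (hz₂ : Quotient.mk _ z₂ = x) :
    Zigzag (liftObj b x z₁ hz₁) (liftObj b x z₂ hz₂) := by
  induction h with
  | refl => exact Relation.ReflTransGen.refl
  | tail h₁ zag ih =>
    rename_i c z₂'
    have hc : Quotient.mk _ c = x := (Quotient.sound h₁).symm.trans hz₁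
    refine Relation.ReflTransGen.tail (ih hc) ?_
    rcases zag with ⟨⟨g⟩⟩ | ⟨⟨g⟩⟩
    · exact Or.inl ⟨liftHom b x g hc hz₂⟩
    · exact Or.inr ⟨liftHom b x g hz₂ hc⟩

theorem toElements_initial : (toElements F).Initial := by
  constructor
  rintro ⟨b, x⟩
  obtain ⟨z₀, hz₀⟩ := Quotient.exists_rep x
  have hne : Nonempty (CostructuredArrow (toElements F) (⟨b, x⟩ : (CFfunctor F).Elements)) :=
    ⟨liftObj b x z₀ hz₀⟩
  refine zigzag_isConnected (fun w₁ w₂ => ?_)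
  -- associate to each `w` an object of `F/b` in component `x`
  have key : ∀ w : CostructuredArrow (toElements F) (⟨b, x⟩ : (CFfunctor F).Elements),
      ∃ (z : CostructuredArrow F b) (hz : Quotient.mk _ z = x),
        Zag w (liftObj b x z hz) := by
    intro w
    refine ⟨CostructuredArrow.mk w.hom.val, ?_, ?_⟩
    · have h : Quotient.mk _ ((CostructuredArrow.map w.hom.val).obj
          (CostructuredArrow.mk (𝟙 (F.obj w.left)))) = x := w.hom.property
      show Quotient.mk _ (CostructuredArrow.mk w.hom.val) = x
      erw [CostructuredArrow.map_mk, Category.id_comp] at h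
      exact h
    · exact Or.inl ⟨CostructuredArrow.homMk (𝟙 w.left)
        (Subtype.ext (by simp [liftObj, toElements]; exact Category.id_comp _))⟩
  obtain ⟨z₁, hz₁, hw₁⟩ := key w₁
  obtain ⟨z₂, hz₂, hw₂⟩ := key w₂
  have hz : Zigzag z₁ z₂ := Quotient.exact (hz₁.trans hz₂.symm)
  have t1 : Zigzag w₁ (liftObj b x z₁ hz₁) := Relation.ReflTransGen.single hw₁
  have t2 : Zigzag (liftObj b x z₁ hz₁) (liftObj b x z₂ hz₂) := zigzag_lift b x hz hz₁ hz₂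
  have t3 : Zigzag (liftObj b x z₂ hz₂) w₂ :=
    Relation.ReflTransGen.single (Zag.symm hw₂)
  exact t1.trans (t2.trans t3)

end Aux

/-- Every functor admits a comprehensive factorization: an initial functor followed by a
discrete opfibration. -/
theorem comprehensive_factorization
    {A B : Type u} [Category.{u} A] [Category.{u} B] (F : A ⥤ B) :
    ∃ (E : Cat.{u, u}) (I : A ⥤ E) (P : E ⥤ B),
      I.Initial ∧ IsDiscreteOpfib P ∧ I ⋙ P = F := by
  exact ⟨Cat.of (CFfunctor F).Elements, toElements F, CategoryOfElements.π _,
    toElements_initial, isDiscreteOpfib_pi _, rfl⟩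
end

section
/- For every category B, the functor category B ⥤ Type is equivalent to the category whose objects are discrete opfibrations p : E ⥤ B and whose morphisms from (E, p) to (E', p') are functors f : E ⥤ E' with f ⋙ p' = p; the equivalence sends a functor H : B ⥤ Type to the projection functor from its category of elements to B. -/
open CategoryTheory

universe u

/-- A discrete opfibration over the category `B`. -/
structure DOpfOver (B : Type u) [Category.{u} B] where
  E : Cat.{u, u}
  p : E ⥤ B
  dopf : IsDiscreteOpfib p

/-- The category of discrete opfibrations over `B`, with morphisms functors strictly commuting
with the projections. -/
instance (B : Type u) [Category.{u} B] : Category (DOpfOver B) where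
  Hom X Y := { f : X.E ⥤ Y.E // f ⋙ Y.p = X.p }
  id X := ⟨𝟭 X.E, rfl⟩
  comp {X Y Z} f g := ⟨f.1 ⋙ g.1, by rw [Functor.assoc, g.2, f.2]⟩
  id_comp f := rfl
  comp_id f := rfl
  assoc f g h := rfl

namespace DOpfProof

variable {B : Type u} [Category.{u} B]

lemma elements_dopf (H : B ⥤ Type u) : IsDiscreteOpfib (CategoryOfElements.π H) := by
  rintro ⟨c, x⟩ b f
  refine ⟨⟨⟨b, H.map f x⟩, ⟨f, rfl⟩⟩, ⟨rfl, by exact Category.comp_id f⟩, ?_⟩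
  rintro ⟨⟨c', x'⟩, gg⟩ ⟨h, hf⟩
  change c' = b at h
  subst h
  erw [eqToHom_refl, Category.comp_id] at hf
  have hx : H.map f x = x' := by rw [← hf]; exact gg.2
  subst hx
  exact congrArg (Sigma.mk _) (Subtype.ext hf)

def toDOpf : (B ⥤ Type u) ⥤ DOpfOver B where
  obj H := ⟨Cat.of H.Elements, CategoryOfElements.π H, elements_dopf H⟩
  map {H H'} α := ⟨CategoryOfElements.map α, CategoryOfElements.map_π α⟩
  map_id H := rfl
  map_comp f g := rfl


variable {B : Type u} [Category.{u} B]

instance faithful_toDOpf : (toDOpf (B := B)).Faithful := by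
  constructor
  intro H H' α β h
  ext b x
  have h2 := Functor.congr_obj (congrArg Subtype.val h) ⟨b, x⟩
  exact eq_of_heq (Sigma.ext_iff.mp h2).2

lemma elem_eq {F : B ⥤ Type u} (s : F.Elements) {b : B} (h : s.1 = b) :
    s = ⟨b, F.map (eqToHom h) s.2⟩ := by
  obtain ⟨a, z⟩ := s
  dsimp at h
  subst h
  simp
  rfl

lemma elem_hom_val {F : B ⥤ Type u} {s t : F.Elements} (h : s = t) :
    (eqToHom h : s ⟶ t).1 = eqToHom (congrArg Sigma.fst h) := by
  subst h; rfl

instance full_toDOpf : (toDOpf (B := B)).Full := by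
  constructor
  intro H H' f
  obtain ⟨q, hq⟩ := f
  have hobj : ∀ s : H.Elements, (q.obj s).1 = s.1 := fun s => Functor.congr_obj hq s
  have hmap : ∀ {s t : H.Elements} (φ : s ⟶ t),
      (q.map φ).1 = eqToHom (hobj s) ≫ φ.1 ≫ eqToHom (hobj t).symm := by
    intro s t φ
    exact Functor.congr_hom hq φ
  have key : ∀ {s t : H.Elements} (φ : s ⟶ t),
      H'.map φ.1 (H'.map (eqToHom (hobj s)) (q.obj s).2) =
        H'.map (eqToHom (hobj t)) (q.obj t).2 := by
    intro s t φ
    conv_rhs => rw [← (q.map φ).2]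
    rw [hmap φ]
    rw [← FunctorToTypes.map_comp_apply, ← FunctorToTypes.map_comp_apply]
    simp
  refine ⟨{ app := fun b => TypeCat.ofHom fun x => H'.map (eqToHom (hobj ⟨b, x⟩)) (q.obj ⟨b, x⟩).2,
            naturality := ?_ }, ?_⟩
  · intro b c g
    ext x
    exact (key (CategoryOfElements.homMk (⟨b, x⟩ : H.Elements) ⟨c, H.map g x⟩ g rfl)).symm
  · apply Subtype.ext
    show CategoryOfElements.map _ = q
    refine CategoryTheory.Functor.ext
      (fun (s : H.Elements) => (elem_eq (q.obj s) (hobj s)).symm) (fun s t φ => ?_)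
    · apply CategoryOfElements.ext
      simp only [CategoryOfElements.comp_val, elem_hom_val]
      rw [hmap φ]
      erw [elem_hom_val]
      simp [toDOpf, CategoryOfElements.map]
      erw [eqToHom_trans_assoc, eqToHom_trans, eqToHom_refl, eqToHom_refl, Category.id_comp, Category.comp_id]

section EssSurj

variable (X : DOpfOver B)

noncomputable def theLift {e : ↑X.E} {b : B} (f : X.p.obj e ⟶ b) : Σ e' : ↑X.E, e ⟶ e' :=
  (X.dopf f).choose

lemma lift_p {e : ↑X.E} {b : B} (f : X.p.obj e ⟶ b) : X.p.obj (theLift X f).1 = b :=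
  (X.dopf f).choose_spec.1.choose

lemma lift_comm {e : ↑X.E} {b : B} (f : X.p.obj e ⟶ b) :
    X.p.map (theLift X f).2 ≫ eqToHom (lift_p X f) = f :=
  (X.dopf f).choose_spec.1.choose_spec

lemma theLift_unique {e : ↑X.E} {b : B} (f : X.p.obj e ⟶ b) (e' : ↑X.E) (g : e ⟶ e')
    (h : X.p.obj e' = b) (hf : X.p.map g ≫ eqToHom h = f) : theLift X f = ⟨e', g⟩ :=
  ((X.dopf f).choose_spec.2 ⟨e', g⟩ ⟨h, hf⟩).symm

lemma hom_unique {e e' : ↑X.E} {b : B} (f : X.p.obj e ⟶ b) (h : X.p.obj e' = b)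
    (g g' : e ⟶ e') (hg : X.p.map g ≫ eqToHom h = f) (hg' : X.p.map g' ≫ eqToHom h = f) :
    g = g' := by
  have h1 := theLift_unique X f e' g h hg
  have h2 := theLift_unique X f e' g' h hg'
  exact eq_of_heq (Sigma.ext_iff.mp (h1.symm.trans h2)).2

lemma p_faithful {e e' : ↑X.E} (g g' : e ⟶ e') (h : X.p.map g = X.p.map g') : g = g' := by
  refine hom_unique X (X.p.map g ≫ eqToHom rfl) rfl g g' rfl ?_
  rw [h]

noncomputable def fib : B ⥤ Type u where
  obj b := {e : ↑X.E // X.p.obj e = b}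
  map {b c} f := TypeCat.ofHom fun s => ⟨(theLift X (eqToHom s.2 ≫ f)).1, lift_p X _⟩
  map_id b := by
    ext s : 3
    apply Subtype.ext
    have hu := theLift_unique X (eqToHom s.2 ≫ 𝟙 b) s.1 (𝟙 s.1) s.2 (by simp)
    exact congrArg Sigma.fst hu
  map_comp {b c d} f g := by
    ext s : 3
    apply Subtype.ext
    set l1 := theLift X (eqToHom s.2 ≫ f) with hl1
    set l2 := theLift X (eqToHom (lift_p X (eqToHom s.2 ≫ f)) ≫ g) with hl2
    have hu : theLift X (eqToHom s.2 ≫ (f ≫ g)) = ⟨l2.1, l1.2 ≫ l2.2⟩ := by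
      refine theLift_unique X _ _ _ (lift_p X _) ?_
      rw [Functor.map_comp, Category.assoc, lift_comm X _, ← Category.assoc,
        lift_comm X _, Category.assoc]
    exact congrArg Sigma.fst hu

lemma p_lift_comp {e : ↑X.E} {b : B} (f : X.p.obj e ⟶ b) {e' : ↑X.E}
    (hc : (theLift X f).1 = e') (h' : b = X.p.obj e') :
    X.p.map ((theLift X f).2 ≫ eqToHom hc) = f ≫ eqToHom h' := by
  rw [Functor.map_comp, eqToHom_map]
  conv_rhs => rw [← lift_comm X f]
  rw [Category.assoc, eqToHom_trans]

noncomputable def toE : (fib X).Elements ⥤ ↑X.E := by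
  refine
  { obj := fun s => s.2.1
    map := fun {s t} φ =>
      (theLift X (eqToHom s.2.2 ≫ φ.1)).2 ≫ eqToHom (congrArg Subtype.val φ.2)
    map_id := ?_
    map_comp := ?_ }
  · intro s
    refine p_faithful X _ _ ?_
    erw [p_lift_comp X _ _ s.2.2.symm]
    simp
  · intro s t r φ ψ
    refine p_faithful X _ _ ?_
    dsimp only
    erw [p_lift_comp X _ _ r.2.2.symm, Functor.map_comp, p_lift_comp X _ _ t.2.2.symm,
      p_lift_comp X _ _ r.2.2.symm]
    simp

lemma p_toE_map {s t : (fib X).Elements} (φ : s ⟶ t) :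
    X.p.map ((toE X).map φ) = eqToHom s.2.2 ≫ φ.1 ≫ eqToHom t.2.2.symm := by
  show X.p.map ((theLift X (eqToHom s.2.2 ≫ φ.1)).2 ≫ eqToHom (congrArg Subtype.val φ.2)) = _
  erw [p_lift_comp X _ _ t.2.2.symm, Category.assoc]

noncomputable def fromE : ↑X.E ⥤ (fib X).Elements where
  obj e := ⟨X.p.obj e, e, rfl⟩
  map {e e'} g := ⟨X.p.map g, by
    apply Subtype.ext
    have hu := theLift_unique X (eqToHom rfl ≫ X.p.map g) e' g rfl (by simp)
    exact congrArg Sigma.fst hu⟩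
  map_id e := by apply CategoryOfElements.ext; simp; rfl
  map_comp f g := by apply CategoryOfElements.ext; simp; rfl

lemma fromE_toE : fromE X ⋙ toE X = 𝟭 ↑X.E := by
  refine CategoryTheory.Functor.ext (fun e => rfl) (fun e e' g => ?_)
  refine p_faithful X _ _ ?_
  rw [Functor.comp_map, p_toE_map X ((fromE X).map g)]
  show eqToHom _ ≫ X.p.map g ≫ eqToHom _ = _
  simp
  erw [eqToHom_map, eqToHom_map]
  rfl

lemma fib_obj_ext (s : (fib X).Elements) : (⟨X.p.obj s.2.1, s.2.1, rfl⟩ : (fib X).Elements) = s := by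
  obtain ⟨b, e, he⟩ := s
  dsimp
  subst he
  rfl

lemma toE_fromE : toE X ⋙ fromE X = 𝟭 (fib X).Elements := by
  refine CategoryTheory.Functor.ext (fun s => fib_obj_ext X s) (fun s t φ => ?_)
  apply CategoryOfElements.ext
  show X.p.map ((toE X).map φ) = _
  rw [p_toE_map X φ]
  simp only [CategoryOfElements.comp_val, elem_hom_val, Functor.id_map]
  erw [elem_hom_val]
  rfl

lemma fromE_pi : fromE X ⋙ CategoryOfElements.π (fib X) = X.p := rfl

lemma toE_p : toE X ⋙ X.p = CategoryOfElements.π (fib X) := by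
  have : toE X ⋙ (fromE X ⋙ CategoryOfElements.π (fib X)) =
      (toE X ⋙ fromE X) ⋙ CategoryOfElements.π (fib X) := rfl
  rw [← DOpfProof.fromE_pi X, this, toE_fromE X, Functor.id_comp]

end EssSurj

instance essSurj_toDOpf : (toDOpf (B := B)).EssSurj := by
  constructor
  intro X
  refine ⟨fib X, ⟨?_⟩⟩
  exact
    { hom := ⟨toE X, DOpfProof.toE_p X⟩
      inv := ⟨fromE X, DOpfProof.fromE_pi X⟩
      hom_inv_id := Subtype.ext (toE_fromE X)
      inv_hom_id := Subtype.ext (fromE_toE X) }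

end DOpfProof

/-- The functor category `B ⥤ Type` is equivalent to the category of discrete opfibrations
over `B`, via the category-of-elements projection. -/
theorem functorCategory_equiv_discreteOpfibrations (B : Type u) [Category.{u} B] :
    ∃ e : (B ⥤ Type u) ≌ DOpfOver B,
      ∀ H : B ⥤ Type u,
        (e.functor.obj H).E = Cat.of H.Elements ∧
          HEq (e.functor.obj H).p (CategoryOfElements.π H) := by
  haveI : (DOpfProof.toDOpf (B := B)).IsEquivalence := {}
  exact ⟨(DOpfProof.toDOpf (B := B)).asEquivalence, fun H => ⟨rfl, HEq.rfl⟩⟩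
end

section
/- For every profunctor K from a category C to a category D, the category of instances of K is equivalent to the category of discrete opfibrations over K. -/
open CategoryTheory Opposite

universe u

variable {C D : Type u} [Category.{u} C] [Category.{u} D]

/-- An instance of a profunctor `K` from `C` to `D`: copresheaves `X` on `C` and `Y` on `D`
together with an action `X.obj c → K(c,d) → Y.obj d` compatible with the actions of `C` and
`D` on `K`. -/
structure ProfInstance (K : Cᵒᵖ × D ⥤ Type u) where
  X : C ⥤ Type u
  Y : D ⥤ Type u
  act : ∀ {c : C} {d : D}, X.obj c → K.obj (op c, d) → Y.obj d
  act_map : ∀ {c : C} {d d' : D} (g : d ⟶ d') (x : X.obj c) (k : K.obj (op c, d)),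
    Y.map g (act x k) = act x (K.map (𝟙 (op c), g) k)
  map_act : ∀ {c c' : C} {d : D} (f : c ⟶ c') (x : X.obj c) (k : K.obj (op c', d)),
    act (X.map f x) k = act x (K.map (f.op, 𝟙 d) k)

/-- The category of instances of a profunctor `K`. -/
instance (K : Cᵒᵖ × D ⥤ Type u) : Category (ProfInstance K) where
  Hom I J := { μν : (I.X ⟶ J.X) × (I.Y ⟶ J.Y) //
      ∀ {c : C} {d : D} (x : I.X.obj c) (k : K.obj (op c, d)),
        μν.2.app d (I.act x k) = J.act (μν.1.app c x) k }
  id I := ⟨(𝟙 I.X, 𝟙 I.Y), fun _ _ => rfl⟩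
  comp {I J L} f g := ⟨(f.1.1 ≫ g.1.1, f.1.2 ≫ g.1.2), fun {c} {d} x k => by
    show g.1.2.app d (f.1.2.app d (I.act x k)) = L.act (g.1.1.app c (f.1.1.app c x)) k
    rw [f.2, g.2]⟩
  id_comp f := rfl
  comp_id f := rfl
  assoc f g h := rfl

/-- A discrete opfibration over a profunctor `K` from `C` to `D`: a profunctor `K'` with
discrete opfibrations `p`, `q` over `C` and `D`, a strict morphism `φ` of profunctors over
`(p, q)`, such that heteromorphisms lift uniquely along `φ` given a lift of their domain. -/
structure DOpfOverProf (K : Cᵒᵖ × D ⥤ Type u) where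
  C' : Cat.{u, u}
  D' : Cat.{u, u}
  K' : Opposite C' × D' ⥤ Type u
  p : C' ⥤ C
  q : D' ⥤ D
  hp : IsDiscreteOpfib p
  hq : IsDiscreteOpfib q
  φ : ∀ (c' : C') (d' : D'), K'.obj (op c', d') → K.obj (op (p.obj c'), q.obj d')
  φnat : ∀ {c₁ c₂ : C'} {d₁ d₂ : D'} (f : c₂ ⟶ c₁) (g : d₁ ⟶ d₂)
    (k : K'.obj (op c₁, d₁)),
    φ c₂ d₂ (K'.map (f.op, g) k) = K.map ((p.map f).op, q.map g) (φ c₁ d₁ k)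
  lift : ∀ (c' : C') (d : D) (k : K.obj (op (p.obj c'), d)),
    ∃! dk : Σ d' : D', K'.obj (op c', d'),
      ∃ h : q.obj dk.1 = d,
        K.map (𝟙 (op (p.obj c')), eqToHom h) (φ c' dk.1 dk.2) = k

/-- A morphism of discrete opfibrations over a profunctor `K`. -/
structure DOpfOverProfHom {K : Cᵒᵖ × D ⥤ Type u} (A B : DOpfOverProf K) where
  F : A.C' ⥤ B.C'
  H : A.D' ⥤ B.D'
  ψ : ∀ (c' : A.C') (d' : A.D'),
    A.K'.obj (op c', d') → B.K'.obj (op (F.obj c'), H.obj d')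
  hF : F ⋙ B.p = A.p
  hH : H ⋙ B.q = A.q
  ψnat : ∀ {c₁ c₂ : A.C'} {d₁ d₂ : A.D'} (f : c₂ ⟶ c₁) (g : d₁ ⟶ d₂)
    (k : A.K'.obj (op c₁, d₁)),
    ψ c₂ d₂ (A.K'.map (f.op, g) k) = B.K'.map ((F.map f).op, H.map g) (ψ c₁ d₁ k)
  hφ : ∀ (c' : A.C') (d' : A.D') (k : A.K'.obj (op c', d')),
    K.map (eqToHom (congrArg op (Functor.congr_obj hF c')),
        eqToHom (Functor.congr_obj hH d'))
      (B.φ (F.obj c') (H.obj d') (ψ c' d' k)) = A.φ c' d' k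

/-- The category of discrete opfibrations over a profunctor `K`. -/
instance (K : Cᵒᵖ × D ⥤ Type u) : Category (DOpfOverProf K) where
  Hom A B := DOpfOverProfHom A B
  id A :=
    { F := 𝟭 A.C'
      H := 𝟭 A.D'
      ψ := fun _ _ k => k
      hF := rfl
      hH := rfl
      ψnat := fun _ _ _ => rfl
      hφ := fun c' d' k => by
        simp only [eqToHom_refl]
        first
          | exact FunctorToTypes.map_id_apply K (A.φ c' d' k)
          | simp }
  comp {A B E} f g :=
    { F := f.F ⋙ g.F
      H := f.H ⋙ g.H
      ψ := fun c' d' k => g.ψ (f.F.obj c') (f.H.obj d') (f.ψ c' d' k)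
      hF := by rw [Functor.assoc, g.hF, f.hF]
      hH := by rw [Functor.assoc, g.hH, f.hH]
      ψnat := fun a b k => by dsimp only; rw [f.ψnat, g.ψnat]; rfl
      hφ := fun c' d' k => by
        have h1 := f.hφ c' d' k
        have h2 := g.hφ (f.F.obj c') (f.H.obj d') (f.ψ c' d' k)
        rw [← h1, ← h2, ← FunctorToTypes.map_comp_apply]
        congr 1 <;> simp [eqToHom_trans] }
  id_comp f := by cases f; rfl
  comp_id f := by cases f; rfl
  assoc f g h := rfl

namespace ProfDOpfAux

open CategoryTheory CategoryOfElements

section DOpf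

variable {E B : Type*} [Category E] [Category B] {p : E ⥤ B} (hp : IsDiscreteOpfib p)

noncomputable def dpair {e : E} {b : B} (f : p.obj e ⟶ b) : Σ e' : E, e ⟶ e' :=
  (hp f).exists.choose

noncomputable def dObj {e : E} {b : B} (f : p.obj e ⟶ b) : E := (dpair hp f).1

noncomputable def dMap {e : E} {b : B} (f : p.obj e ⟶ b) : e ⟶ dObj hp f := (dpair hp f).2

lemma dObj_eq {e : E} {b : B} (f : p.obj e ⟶ b) : p.obj (dObj hp f) = b :=
  (hp f).exists.choose_spec.choose

lemma dMap_eq {e : E} {b : B} (f : p.obj e ⟶ b) :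
    p.map (dMap hp f) ≫ eqToHom (dObj_eq hp f) = f :=
  (hp f).exists.choose_spec.choose_spec

lemma dMap_p {e : E} {b : B} (f : p.obj e ⟶ b) :
    p.map (dMap hp f) = f ≫ eqToHom (dObj_eq hp f).symm := by
  rw [← comp_eqToHom_iff (dObj_eq hp f)]; exact dMap_eq hp f

lemma d_eq {e : E} {b : B} (f : p.obj e ⟶ b) {e' : E} (g : e ⟶ e') (h : p.obj e' = b)
    (hg : p.map g ≫ eqToHom h = f) :
    ∃ he : dObj hp f = e', dMap hp f ≫ eqToHom he = g := by
  have hu : (⟨dObj hp f, dMap hp f⟩ : Σ e' : E, e ⟶ e') = ⟨e', g⟩ :=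
    (hp f).unique ⟨dObj_eq hp f, dMap_eq hp f⟩ ⟨h, hg⟩
  obtain ⟨h1, h2⟩ := Sigma.ext_iff.mp hu
  subst h1
  exact ⟨rfl, by simpa using eq_of_heq h2⟩

lemma dObj_unique {e : E} {b : B} (f : p.obj e ⟶ b) {e' : E} (g : e ⟶ e') (h : p.obj e' = b)
    (hg : p.map g ≫ eqToHom h = f) : dObj hp f = e' :=
  (d_eq hp f g h hg).choose

end DOpf

section LiftAux

variable {K : Cᵒᵖ × D ⥤ Type u}

lemma Kmap_comp {c₁ c₂ c₃ : Cᵒᵖ} {d₁ d₂ d₃ : D} (f₁ : c₁ ⟶ c₂) (f₂ : c₂ ⟶ c₃)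
    (g₁ : d₁ ⟶ d₂) (g₂ : d₂ ⟶ d₃) (x : K.obj (c₁, d₁)) :
    K.map ((f₁ ≫ f₂, g₁ ≫ g₂) : (c₁, d₁) ⟶ (c₃, d₃)) x
      = K.map ((f₂, g₂) : (c₂, d₂) ⟶ (c₃, d₃)) (K.map ((f₁, g₁) : (c₁, d₁) ⟶ (c₂, d₂)) x) :=
  FunctorToTypes.map_comp_apply K
    (show (c₁, d₁) ⟶ (c₂, d₂) from (f₁, g₁)) (show (c₂, d₂) ⟶ (c₃, d₃) from (f₂, g₂)) x

lemma Kmap_id {c : Cᵒᵖ} {d : D} (x : K.obj (c, d)) : K.map (𝟙 c, 𝟙 d) x = x :=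
  FunctorToTypes.map_id_apply K x

variable (A : DOpfOverProf K)

noncomputable def lpair (c' : A.C') (d : D) (k : K.obj (op (A.p.obj c'), d)) :
    Σ d' : A.D', A.K'.obj (op c', d') := (A.lift c' d k).exists.choose

noncomputable def lObj (c' : A.C') (d : D) (k : K.obj (op (A.p.obj c'), d)) : A.D' :=
  (lpair A c' d k).1

noncomputable def lK (c' : A.C') (d : D) (k : K.obj (op (A.p.obj c'), d)) :
    A.K'.obj (op c', lObj A c' d k) := (lpair A c' d k).2

lemma lObj_eq (c' : A.C') (d : D) (k : K.obj (op (A.p.obj c'), d)) :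
    A.q.obj (lObj A c' d k) = d :=
  (A.lift c' d k).exists.choose_spec.choose

lemma lK_eq (c' : A.C') (d : D) (k : K.obj (op (A.p.obj c'), d)) :
    K.map (𝟙 (op (A.p.obj c')), eqToHom (lObj_eq A c' d k))
      (A.φ c' (lObj A c' d k) (lK A c' d k)) = k :=
  (A.lift c' d k).exists.choose_spec.choose_spec

lemma l_eq (c' : A.C') (d : D) (k : K.obj (op (A.p.obj c'), d)) {d' : A.D'}
    (k' : A.K'.obj (op c', d')) (h : A.q.obj d' = d)
    (hk : K.map (𝟙 (op (A.p.obj c')), eqToHom h) (A.φ c' d' k') = k) :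
    ∃ he : lObj A c' d k = d', HEq (lK A c' d k) k' := by
  have hu : (⟨lObj A c' d k, lK A c' d k⟩ : Σ d' : A.D', A.K'.obj (op c', d')) = ⟨d', k'⟩ :=
    (A.lift c' d k).unique ⟨lObj_eq A c' d k, lK_eq A c' d k⟩ ⟨h, hk⟩
  obtain ⟨h1, h2⟩ := Sigma.ext_iff.mp hu
  exact ⟨h1, h2⟩

lemma lObj_unique (c' : A.C') (d : D) (k : K.obj (op (A.p.obj c'), d)) {d' : A.D'}
    (k' : A.K'.obj (op c', d')) (h : A.q.obj d' = d)
    (hk : K.map (𝟙 (op (A.p.obj c')), eqToHom h) (A.φ c' d' k') = k) :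
    lObj A c' d k = d' :=
  (l_eq A c' d k k' h hk).choose

lemma φ_inj {c' : A.C'} {d' : A.D'} {k₁ k₂ : A.K'.obj (op c', d')}
    (h : A.φ c' d' k₁ = A.φ c' d' k₂) : k₁ = k₂ := by
  have key : ∀ k : A.K'.obj (op c', d'),
      K.map (𝟙 (op (A.p.obj c')), eqToHom (rfl : A.q.obj d' = A.q.obj d'))
        (A.φ c' d' k) = A.φ c' d' k := fun k => by
    simp only [eqToHom_refl]; exact Kmap_id _
  have hu := (A.lift c' (A.q.obj d') (A.φ c' d' k₁)).unique
    (y₁ := ⟨d', k₁⟩) ⟨rfl, key k₁⟩ (y₂ := ⟨d', k₂⟩) ⟨rfl, by rw [key k₂, h]⟩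
  exact eq_of_heq (Sigma.ext_iff.mp hu).2

end LiftAux

section Elements

variable {K : Cᵒᵖ × D ⥤ Type u}

lemma isDiscreteOpfib_pi (F : C ⥤ Type u) : IsDiscreteOpfib (π F) := by
  intro e b f
  refine ⟨⟨⟨b, F.map f e.2⟩, ⟨f, rfl⟩⟩, ⟨rfl, by exact Category.comp_id _⟩, ?_⟩
  rintro ⟨⟨b', x'⟩, g⟩ ⟨h, hg⟩
  change b' = b at h
  subst h
  simp only [eqToHom_refl, Category.comp_id] at hg
  have hgv : g.val = f := (Category.comp_id _).symm.trans hg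
  have hx : x' = F.map f e.2 := by rw [← hgv]; exact g.property.symm
  subst hx
  exact Sigma.ext rfl (heq_of_eq (CategoryOfElements.ext F _ _ hgv))

@[reducible] def catOf (X : Type u) [Category.{u} X] : Cat.{u, u} :=
  (Bundled.mk X inferInstance : Bundled Category.{u, u})

@[reducible] def elemK (I : ProfInstance K) :
    Opposite (catOf I.X.Elements) × (catOf I.Y.Elements) ⥤ Type u where
  obj ce := {k : K.obj (op ce.1.unop.1, ce.2.1) // I.act ce.1.unop.2 k = ce.2.2}
  map {ce₁ ce₂} fg := TypeCat.ofHom fun k =>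
    ⟨K.map ((fg.1.unop.val.op, fg.2.val) :
        (op ce₁.1.unop.1, ce₁.2.1) ⟶ (op ce₂.1.unop.1, ce₂.2.1)) k.val, by
      have h1 : K.map ((fg.1.unop.val.op, fg.2.val) :
          (op ce₁.1.unop.1, ce₁.2.1) ⟶ (op ce₂.1.unop.1, ce₂.2.1)) k.val
          = K.map ((𝟙 (op ce₂.1.unop.1), fg.2.val) :
              (op ce₂.1.unop.1, ce₁.2.1) ⟶ (op ce₂.1.unop.1, ce₂.2.1))
            (K.map ((fg.1.unop.val.op, 𝟙 ce₁.2.1) :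
              (op ce₁.1.unop.1, ce₁.2.1) ⟶ (op ce₂.1.unop.1, ce₁.2.1)) k.val) := by
        rw [← Kmap_comp]
        simp
      rw [h1, ← I.act_map, ← I.map_act, fg.1.unop.property, k.property]
      exact fg.2.property⟩
  map_id ce := by
    ext k
    exact Kmap_id k.val
  map_comp {ce₁ ce₂ ce₃} fg fg' := by
    ext k
    exact Kmap_comp fg.1.unop.val.op fg'.1.unop.val.op fg.2.val fg'.2.val k.val

end Elements

section ToDOpf

variable {K : Cᵒᵖ × D ⥤ Type u}

@[reducible] noncomputable def toDOpf (I : ProfInstance K) : DOpfOverProf K where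
  C' := catOf I.X.Elements
  D' := catOf I.Y.Elements
  K' := elemK I
  p := π I.X
  q := π I.Y
  hp := isDiscreteOpfib_pi I.X
  hq := isDiscreteOpfib_pi I.Y
  φ _ _ k := k.val
  φnat _ _ _ := rfl
  lift c' d k := by
    refine ⟨⟨⟨d, I.act c'.2 k⟩, ⟨k, rfl⟩⟩, ⟨rfl, ?_⟩, ?_⟩
    · simp only [eqToHom_refl]
      exact Kmap_id k
    · rintro ⟨⟨d₁, y₁⟩, k₁⟩ ⟨h, hk⟩
      change d₁ = d at h
      subst h
      simp only [eqToHom_refl] at hk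
      have hk1 : k₁.val = k := (Kmap_id (K := K) _).symm.trans hk
      have hy : y₁ = I.act c'.2 k := by rw [← hk1]; exact k₁.property.symm
      subst hy
      exact Sigma.ext rfl (heq_of_eq (Subtype.ext hk1))

lemma Kmap_eqToHom_inj {c₁ c₂ : Cᵒᵖ} {d₁ d₂ : D} (h₁ : c₁ = c₂) (h₂ : d₁ = d₂)
    {a b : K.obj (c₁, d₁)}
    (h : K.map ((eqToHom h₁, eqToHom h₂) : (c₁, d₁) ⟶ (c₂, d₂)) a
      = K.map ((eqToHom h₁, eqToHom h₂) : (c₁, d₁) ⟶ (c₂, d₂)) b) : a = b := by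
  cases h₁; cases h₂
  rwa [eqToHom_refl, eqToHom_refl, Kmap_id, Kmap_id] at h

lemma hom_ext {A B : DOpfOverProf K} (f g : DOpfOverProfHom A B)
    (hFe : f.F = g.F) (hHe : f.H = g.H) : f = g := by
  obtain ⟨F₁, H₁, ψ₁, hF₁, hH₁, hn₁, hp₁⟩ := f
  obtain ⟨F₂, H₂, ψ₂, hF₂, hH₂, hn₂, hp₂⟩ := g
  dsimp at hFe hHe
  subst hFe hHe
  have hψ : ψ₁ = ψ₂ := by
    funext c' d' k
    apply φ_inj B
    apply Kmap_eqToHom_inj (congrArg op (Functor.congr_obj hF₁ c')) (Functor.congr_obj hH₁ d')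
    exact (hp₁ c' d' k).trans (hp₂ c' d' k).symm
  subst hψ
  rfl

noncomputable def toDOpfMap {I J : ProfInstance K} (m : I ⟶ J) :
    DOpfOverProfHom (toDOpf I) (toDOpf J) where
  F := CategoryOfElements.map m.val.1
  H := CategoryOfElements.map m.val.2
  ψ c' d' k := ⟨k.val, by
    have h1 := m.property c'.2 k.val
    show J.act (m.val.1.app c'.1 c'.2) k.val = m.val.2.app d'.1 d'.2
    rw [← h1, k.property]⟩
  hF := map_π m.val.1
  hH := map_π m.val.2
  ψnat _ _ _ := rfl
  hφ _ _ k := Kmap_id k.val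

@[reducible] noncomputable def Phi : ProfInstance K ⥤ DOpfOverProf K where
  obj := toDOpf
  map := toDOpfMap
  map_id I := hom_ext _ _ rfl rfl
  map_comp f g := hom_ext _ _ rfl rfl

end ToDOpf

section Full

variable {K : Cᵒᵖ × D ⥤ Type u}

lemma eq_nat_aux {E : Type u} [Category.{u} E] (F : E ⥤ Type u) {a b a' b' : E} (h1 : a = b)
    (f : b ⟶ b') (h2 : b' = a') (h3 : a' = b') (h4 : a = b) (z : F.obj a) :
    F.map ((eqToHom h1 ≫ f ≫ eqToHom h2) ≫ eqToHom h3) z = F.map (eqToHom h4 ≫ f) z := by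
  subst h1 h2; simp

lemma eq_aux2 {E : Type u} [Category.{u} E] {a b a' b' : E} (u : a ⟶ b) (h1 : a = a')
    (h2 : a' = a) (h3 : b = b') (h4 : b' = b) :
    u = eqToHom h1 ≫ (eqToHom h2 ≫ u ≫ eqToHom h3) ≫ eqToHom h4 := by
  subst h1 h3; simp

lemma eq_aux3 {E : Type u} [Category.{u} E] (F : E ⥤ Type u) {a b : E} (h1 : a = b)
    (h2 : b = a) (z : F.obj a) : F.map (eqToHom h2) (F.map (eqToHom h1) z) = z := by
  subst h1; simp

noncomputable def fullMu {I J : ProfInstance K} (m : DOpfOverProfHom (toDOpf I) (toDOpf J)) :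
    I.X ⟶ J.X where
  app c := TypeCat.ofHom fun x => J.X.map (eqToHom (Functor.congr_obj m.hF ⟨c, x⟩)) (m.F.obj ⟨c, x⟩).2
  naturality c c₁ f := by
    ext x
    have hw : (m.F.map (⟨f, rfl⟩ : I.X.elementsMk c x ⟶ I.X.elementsMk c₁ (I.X.map f x))).val
        = eqToHom (Functor.congr_obj m.hF (I.X.elementsMk c x)) ≫ f
          ≫ eqToHom (Functor.congr_obj m.hF (I.X.elementsMk c₁ (I.X.map f x))).symm :=
      Functor.congr_hom m.hF (⟨f, rfl⟩ : I.X.elementsMk c x ⟶ I.X.elementsMk c₁ (I.X.map f x))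
    show J.X.map (eqToHom _) (m.F.obj (I.X.elementsMk c₁ (I.X.map f x))).2
      = J.X.map f (J.X.map (eqToHom _) (m.F.obj (I.X.elementsMk c x)).2)
    rw [← (m.F.map (⟨f, rfl⟩ : I.X.elementsMk c x ⟶ I.X.elementsMk c₁ (I.X.map f x))).property,
      ← FunctorToTypes.map_comp_apply, ← FunctorToTypes.map_comp_apply, hw]
    exact eq_nat_aux J.X _ f _ _ _ _

noncomputable def fullNu {I J : ProfInstance K} (m : DOpfOverProfHom (toDOpf I) (toDOpf J)) :
    I.Y ⟶ J.Y where
  app d := TypeCat.ofHom fun y => J.Y.map (eqToHom (Functor.congr_obj m.hH ⟨d, y⟩)) (m.H.obj ⟨d, y⟩).2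
  naturality d d₁ g := by
    ext y
    have hw : (m.H.map (⟨g, rfl⟩ : I.Y.elementsMk d y ⟶ I.Y.elementsMk d₁ (I.Y.map g y))).val
        = eqToHom (Functor.congr_obj m.hH (I.Y.elementsMk d y)) ≫ g
          ≫ eqToHom (Functor.congr_obj m.hH (I.Y.elementsMk d₁ (I.Y.map g y))).symm :=
      Functor.congr_hom m.hH (⟨g, rfl⟩ : I.Y.elementsMk d y ⟶ I.Y.elementsMk d₁ (I.Y.map g y))
    show J.Y.map (eqToHom _) (m.H.obj (I.Y.elementsMk d₁ (I.Y.map g y))).2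
      = J.Y.map g (J.Y.map (eqToHom _) (m.H.obj (I.Y.elementsMk d y)).2)
    rw [← (m.H.map (⟨g, rfl⟩ : I.Y.elementsMk d y ⟶ I.Y.elementsMk d₁ (I.Y.map g y))).property,
      ← FunctorToTypes.map_comp_apply, ← FunctorToTypes.map_comp_apply, hw]
    exact eq_nat_aux J.Y _ g _ _ _ _

lemma full_cond {I J : ProfInstance K} (m : DOpfOverProfHom (toDOpf I) (toDOpf J))
    {c : C} {d : D} (x : I.X.obj c) (k : K.obj (op c, d)) :
    (fullNu m).app d (I.act x k) = J.act ((fullMu m).app c x) k := by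
  have hc : (m.F.obj ⟨c, x⟩).1 = c := Functor.congr_obj m.hF ⟨c, x⟩
  have hd : (m.H.obj ⟨d, I.act x k⟩).1 = d := Functor.congr_obj m.hH ⟨d, I.act x k⟩
  have hprop : J.act (m.F.obj ⟨c, x⟩).2
      (m.ψ (⟨c, x⟩ : I.X.Elements) (⟨d, I.act x k⟩ : I.Y.Elements) ⟨k, rfl⟩).val
      = (m.H.obj ⟨d, I.act x k⟩).2 :=
    (m.ψ (⟨c, x⟩ : I.X.Elements) (⟨d, I.act x k⟩ : I.Y.Elements) ⟨k, rfl⟩).property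
  have hphi : K.map ((eqToHom (congrArg op hc), eqToHom hd) :
        (op (m.F.obj ⟨c, x⟩).1, (m.H.obj ⟨d, I.act x k⟩).1) ⟶ (op c, d))
      (m.ψ (⟨c, x⟩ : I.X.Elements) (⟨d, I.act x k⟩ : I.Y.Elements) ⟨k, rfl⟩).val = k :=
    m.hφ (⟨c, x⟩ : I.X.Elements) (⟨d, I.act x k⟩ : I.Y.Elements) ⟨k, rfl⟩
  show J.Y.map (eqToHom hd) (m.H.obj ⟨d, I.act x k⟩).2
    = J.act (J.X.map (eqToHom hc) (m.F.obj ⟨c, x⟩).2) k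
  rw [← hprop, J.act_map, J.map_act]
  apply congrArg
  have h2 := congrArg
    (K.map (((eqToHom hc).op, 𝟙 d) : (op c, d) ⟶ (op (m.F.obj ⟨c, x⟩).1, d))) hphi.symm
  rw [h2, ← Kmap_comp]
  congr 1
  simp [eqToHom_op, Prod.ext_iff]

end Full

section FullFaithful

variable {K : Cᵒᵖ × D ⥤ Type u}

lemma elements_eqToHom_val {F : C ⥤ Type u} {a b : F.Elements} (h : a = b) :
    (eqToHom h).val = eqToHom (congrArg Sigma.fst h) := by cases h; rfl

lemma elements_eqToHom_val' {F : D ⥤ Type u} {a b : F.Elements} (h : a = b) :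
    (eqToHom h).val = eqToHom (congrArg Sigma.fst h) := by cases h; rfl

lemma phi_faithful : (Phi (K := K)).Faithful where
  map_injective {I J} {m₁ m₂} h := by
    have hF : CategoryOfElements.map m₁.val.1 = CategoryOfElements.map m₂.val.1 :=
      congrArg DOpfOverProfHom.F h
    have hH : CategoryOfElements.map m₁.val.2 = CategoryOfElements.map m₂.val.2 :=
      congrArg DOpfOverProfHom.H h
    apply Subtype.ext
    have hμ : m₁.val.1 = m₂.val.1 := by
      apply NatTrans.ext
      funext c
      ext x
      exact eq_of_heq (Sigma.ext_iff.mp (Functor.congr_obj hF ⟨c, x⟩)).2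
    have hν : m₁.val.2 = m₂.val.2 := by
      apply NatTrans.ext
      funext d
      ext y
      exact eq_of_heq (Sigma.ext_iff.mp (Functor.congr_obj hH ⟨d, y⟩)).2
    exact Prod.ext hμ hν

lemma phi_full : (Phi (K := K)).Full where
  map_surjective {I J} m := by
    refine ⟨⟨(fullMu m, fullNu m), fun {c d} x k => full_cond m x k⟩, ?_⟩
    apply hom_ext
    · show CategoryOfElements.map (fullMu m) = m.F
      refine CategoryTheory.Functor.ext (fun e => ?_) (fun e e' u => ?_)
      · refine Functor.Elements.ext _ _ (Functor.congr_obj m.hF e).symm ?_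
        show J.X.map (eqToHom _) (J.X.map (eqToHom _) (m.F.obj ⟨e.1, e.2⟩).2) = _
        exact eq_aux3 J.X _ _ _
      · apply CategoryOfElements.ext
        have hw : (m.F.map u).val
            = eqToHom (Functor.congr_obj m.hF e) ≫ u.val
              ≫ eqToHom (Functor.congr_obj m.hF e').symm :=
          Functor.congr_hom m.hF u
        simp [elements_eqToHom_val, hw, eqToHom_trans]
        exact eq_aux2 _ _ _ _ _
    · show CategoryOfElements.map (fullNu m) = m.H
      refine CategoryTheory.Functor.ext (fun e => ?_) (fun e e' u => ?_)
      · refine Functor.Elements.ext _ _ (Functor.congr_obj m.hH e).symm ?_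
        show J.Y.map (eqToHom _) (J.Y.map (eqToHom _) (m.H.obj ⟨e.1, e.2⟩).2) = _
        exact eq_aux3 J.Y _ _ _
      · apply CategoryOfElements.ext
        have hw : (m.H.map u).val
            = eqToHom (Functor.congr_obj m.hH e) ≫ u.val
              ≫ eqToHom (Functor.congr_obj m.hH e').symm :=
          Functor.congr_hom m.hH u
        simp [elements_eqToHom_val', hw, eqToHom_trans]
        exact eq_aux2 _ _ _ _ _

end FullFaithful

section Fiber

variable {K : Cᵒᵖ × D ⥤ Type u}

@[reducible] noncomputable def fiberFun {E : Type u} [Category.{u} E] {B : Type u} [Category.{u} B]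
    (p : E ⥤ B) (hp : IsDiscreteOpfib p) : B ⥤ Type u where
  obj b := {e : E // p.obj e = b}
  map {b b₁} f := TypeCat.ofHom fun x => ⟨dObj hp (eqToHom x.2 ≫ f), dObj_eq hp _⟩
  map_id b := by
    ext x
    show dObj hp (eqToHom x.2 ≫ 𝟙 b) = x.1
    exact dObj_unique hp _ (𝟙 x.1) x.2 (by simp)
  map_comp {b b₁ b₂} f g := by
    ext x
    show dObj hp (eqToHom x.2 ≫ f ≫ g)
      = dObj hp (eqToHom (dObj_eq hp (eqToHom x.2 ≫ f)) ≫ g)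
    refine dObj_unique hp _
      (dMap hp (eqToHom x.2 ≫ f) ≫ dMap hp (eqToHom (dObj_eq hp (eqToHom x.2 ≫ f)) ≫ g))
      (dObj_eq hp _) ?_
    rw [p.map_comp, Category.assoc, dMap_eq hp, ← Category.assoc, dMap_eq hp, Category.assoc]

variable (A : DOpfOverProf K)

noncomputable def kbar {c : C} {d : D} (x : {c' : A.C' // A.p.obj c' = c})
    (k : K.obj (op c, d)) : K.obj (op (A.p.obj x.1), d) :=
  K.map ((eqToHom (congrArg op x.2).symm, 𝟙 d) : (op c, d) ⟶ (op (A.p.obj x.1), d)) k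

lemma kbar_natD {c : C} {d d' : D} (x : {c' : A.C' // A.p.obj c' = c}) (g : d ⟶ d')
    (k : K.obj (op c, d)) :
    kbar A x (K.map ((𝟙 (op c), g) : (op c, d) ⟶ (op c, d')) k)
      = K.map ((𝟙 (op (A.p.obj x.1)), g) : (op (A.p.obj x.1), d) ⟶ (op (A.p.obj x.1), d'))
        (kbar A x k) := by
  unfold kbar
  rw [← Kmap_comp, ← Kmap_comp]
  simp

@[reducible] noncomputable def fiberInst : ProfInstance K where
  X := fiberFun A.p A.hp
  Y := fiberFun A.q A.hq
  act {c d} x k := ⟨lObj A x.1 d (kbar A x k), lObj_eq A _ _ _⟩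
  act_map {c d d'} g x k := by
    apply Subtype.ext
    show dObj A.hq (eqToHom (lObj_eq A x.1 d (kbar A x k)) ≫ g)
      = lObj A x.1 d' (kbar A x (K.map ((𝟙 (op c), g) : (op c, d) ⟶ (op c, d')) k))
    refine (lObj_unique A x.1 d' _
      (A.K'.map ((𝟙 x.1).op, dMap A.hq (eqToHom (lObj_eq A x.1 d (kbar A x k)) ≫ g))
        (lK A x.1 d (kbar A x k)))
      (dObj_eq A.hq _) ?_).symm
    rw [A.φnat, ← Kmap_comp, dMap_eq A.hq]
    conv_rhs => rw [kbar_natD, ← lK_eq A x.1 d (kbar A x k)]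
    rw [← Kmap_comp]
    simp
  map_act {c c₁ d} f x k := by
    apply Subtype.ext
    show lObj A (dObj A.hp (eqToHom x.2 ≫ f)) d
        (kbar A ⟨dObj A.hp (eqToHom x.2 ≫ f), dObj_eq A.hp _⟩ k)
      = lObj A x.1 d (kbar A x (K.map ((f.op, 𝟙 d) : (op c₁, d) ⟶ (op c, d)) k))
    refine (lObj_unique A x.1 d _
      (A.K'.map ((dMap A.hp (eqToHom x.2 ≫ f)).op,
          𝟙 (lObj A (dObj A.hp (eqToHom x.2 ≫ f)) d
            (kbar A ⟨dObj A.hp (eqToHom x.2 ≫ f), dObj_eq A.hp _⟩ k)))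
        (lK A (dObj A.hp (eqToHom x.2 ≫ f)) d
          (kbar A ⟨dObj A.hp (eqToHom x.2 ≫ f), dObj_eq A.hp _⟩ k)))
      (lObj_eq A _ d _) ?_).symm
    rw [A.φnat, ← Kmap_comp]
    simp only [CategoryTheory.Functor.map_id, Category.comp_id, Category.id_comp]
    have h3 : K.map (((A.p.map (dMap A.hp (eqToHom x.2 ≫ f))).op,
          eqToHom (lObj_eq A (dObj A.hp (eqToHom x.2 ≫ f)) d
            (kbar A ⟨dObj A.hp (eqToHom x.2 ≫ f), dObj_eq A.hp _⟩ k))) :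
          (op (A.p.obj (dObj A.hp (eqToHom x.2 ≫ f))), _) ⟶ (op (A.p.obj x.1), d))
        (A.φ _ _ (lK A (dObj A.hp (eqToHom x.2 ≫ f)) d
          (kbar A ⟨dObj A.hp (eqToHom x.2 ≫ f), dObj_eq A.hp _⟩ k)))
        = K.map (((A.p.map (dMap A.hp (eqToHom x.2 ≫ f))).op, 𝟙 d) :
            (op (A.p.obj (dObj A.hp (eqToHom x.2 ≫ f))), d) ⟶ (op (A.p.obj x.1), d))
          (K.map ((𝟙 _, eqToHom (lObj_eq A (dObj A.hp (eqToHom x.2 ≫ f)) d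
              (kbar A ⟨dObj A.hp (eqToHom x.2 ≫ f), dObj_eq A.hp _⟩ k))) : _ ⟶ _)
            (A.φ _ _ (lK A (dObj A.hp (eqToHom x.2 ≫ f)) d
              (kbar A ⟨dObj A.hp (eqToHom x.2 ≫ f), dObj_eq A.hp _⟩ k)))) := by
      rw [← Kmap_comp]; simp
    rw [h3, lK_eq]
    unfold kbar
    rw [← Kmap_comp, ← Kmap_comp]
    congr 1
    simp [Prod.ext_iff, dMap_p, eqToHom_op]

end Fiber

section Comparison

variable {K : Cᵒᵖ × D ⥤ Type u} (A : DOpfOverProf K)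

noncomputable def fibF : (fiberFun A.p A.hp).Elements ⥤ A.C' where
  obj e := e.2.1
  map {e₁ e₂} u := dMap A.hp (eqToHom e₁.2.2 ≫ u.val) ≫ eqToHom (congrArg Subtype.val u.property)
  map_id e := by
    obtain ⟨he, hm⟩ := d_eq A.hp (eqToHom e.2.2 ≫ (𝟙 e : e ⟶ e).val) (𝟙 e.2.1) e.2.2 (by simp)
    exact hm
  map_comp {e₁ e₂ e₃} u v := by
    have hcond : A.p.map
        ((dMap A.hp (eqToHom e₁.2.2 ≫ u.val) ≫ eqToHom (congrArg Subtype.val u.property)) ≫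
          (dMap A.hp (eqToHom e₂.2.2 ≫ v.val) ≫ eqToHom (congrArg Subtype.val v.property)))
        ≫ eqToHom e₃.2.2 = eqToHom e₁.2.2 ≫ (u ≫ v).val := by
      simp [dMap_p, eqToHom_map]
    obtain ⟨he, hm⟩ := d_eq A.hp (eqToHom e₁.2.2 ≫ (u ≫ v).val) _ e₃.2.2 hcond
    exact hm

noncomputable def fibFD : (fiberFun A.q A.hq).Elements ⥤ A.D' where
  obj e := e.2.1
  map {e₁ e₂} u := dMap A.hq (eqToHom e₁.2.2 ≫ u.val) ≫ eqToHom (congrArg Subtype.val u.property)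
  map_id e := by
    obtain ⟨he, hm⟩ := d_eq A.hq (eqToHom e.2.2 ≫ (𝟙 e : e ⟶ e).val) (𝟙 e.2.1) e.2.2 (by simp)
    exact hm
  map_comp {e₁ e₂ e₃} u v := by
    have hcond : A.q.map
        ((dMap A.hq (eqToHom e₁.2.2 ≫ u.val) ≫ eqToHom (congrArg Subtype.val u.property)) ≫
          (dMap A.hq (eqToHom e₂.2.2 ≫ v.val) ≫ eqToHom (congrArg Subtype.val v.property)))
        ≫ eqToHom e₃.2.2 = eqToHom e₁.2.2 ≫ (u ≫ v).val := by
      simp [dMap_p, eqToHom_map]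
    obtain ⟨he, hm⟩ := d_eq A.hq (eqToHom e₁.2.2 ≫ (u ≫ v).val) _ e₃.2.2 hcond
    exact hm

noncomputable def fibG : A.C' ⥤ (fiberFun A.p A.hp).Elements where
  obj c' := ⟨A.p.obj c', ⟨c', rfl⟩⟩
  map {c₁ c₂} g := ⟨A.p.map g, Subtype.ext (dObj_unique A.hp _ g rfl (by simp))⟩
  map_id _ := by apply CategoryOfElements.ext; simp; rfl
  map_comp _ _ := by apply CategoryOfElements.ext; simp; rfl

noncomputable def fibGD : A.D' ⥤ (fiberFun A.q A.hq).Elements where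
  obj d' := ⟨A.q.obj d', ⟨d', rfl⟩⟩
  map {d₁ d₂} g := ⟨A.q.map g, Subtype.ext (dObj_unique A.hq _ g rfl (by simp))⟩
  map_id _ := by apply CategoryOfElements.ext; simp; rfl
  map_comp _ _ := by apply CategoryOfElements.ext; simp; rfl

end Comparison

section Iso

variable {K : Cᵒᵖ × D ⥤ Type u} (A : DOpfOverProf K)

@[simp] lemma fibF_obj (e : (fiberFun A.p A.hp).Elements) : (fibF A).obj e = e.2.1 := rfl

@[simp] lemma fibFD_obj (e : (fiberFun A.q A.hq).Elements) : (fibFD A).obj e = e.2.1 := rfl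

noncomputable def psiF (e₁ : (fiberFun A.p A.hp).Elements) (e₂ : (fiberFun A.q A.hq).Elements)
    (kk : (elemK (fiberInst A)).obj (op e₁, e₂)) : A.K'.obj (op e₁.2.1, e₂.2.1) :=
  A.K'.map ((𝟙 e₁.2.1).op, eqToHom (congrArg Subtype.val kk.property))
    (lK A e₁.2.1 e₂.1 (kbar A e₁.2 kk.val))

lemma phi_psi (e₁ : (fiberFun A.p A.hp).Elements) (e₂ : (fiberFun A.q A.hq).Elements)
    (kk : (elemK (fiberInst A)).obj (op e₁, e₂)) :
    A.φ e₁.2.1 e₂.2.1 (psiF A e₁ e₂ kk)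
      = K.map ((eqToHom (congrArg op e₁.2.2).symm, eqToHom e₂.2.2.symm) :
          (op e₁.1, e₂.1) ⟶ (op (A.p.obj e₁.2.1), A.q.obj e₂.2.1)) kk.val := by
  unfold psiF
  rw [A.φnat]
  simp only [CategoryTheory.Functor.map_id, op_id, eqToHom_map]
  have h4 : eqToHom (congrArg A.q.obj (congrArg Subtype.val kk.property))
      = eqToHom (lObj_eq A e₁.2.1 e₂.1 (kbar A e₁.2 kk.val)) ≫ eqToHom e₂.2.2.symm := by
    rw [eqToHom_trans]
  rw [h4]
  have h5 : K.map ((𝟙 (op (A.p.obj e₁.2.1)),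
        eqToHom (lObj_eq A e₁.2.1 e₂.1 (kbar A e₁.2 kk.val)) ≫ eqToHom e₂.2.2.symm) :
          (op (A.p.obj e₁.2.1), A.q.obj (lObj A e₁.2.1 e₂.1 (kbar A e₁.2 kk.val)))
            ⟶ (op (A.p.obj e₁.2.1), A.q.obj e₂.2.1))
        (A.φ e₁.2.1 _ (lK A e₁.2.1 e₂.1 (kbar A e₁.2 kk.val)))
      = K.map ((𝟙 (op (A.p.obj e₁.2.1)), eqToHom e₂.2.2.symm) :
            (op (A.p.obj e₁.2.1), e₂.1) ⟶ (op (A.p.obj e₁.2.1), A.q.obj e₂.2.1))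
        (K.map ((𝟙 (op (A.p.obj e₁.2.1)),
            eqToHom (lObj_eq A e₁.2.1 e₂.1 (kbar A e₁.2 kk.val))) :
              (op (A.p.obj e₁.2.1), A.q.obj (lObj A e₁.2.1 e₂.1 (kbar A e₁.2 kk.val)))
                ⟶ (op (A.p.obj e₁.2.1), e₂.1))
          (A.φ e₁.2.1 _ (lK A e₁.2.1 e₂.1 (kbar A e₁.2 kk.val)))) := by
    rw [← Kmap_comp]; simp
  rw [h5, lK_eq]
  unfold kbar
  rw [← Kmap_comp]
  simp

noncomputable def fibHom : DOpfOverProfHom (toDOpf (fiberInst A)) A where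
  F := fibF A
  H := fibFD A
  ψ := psiF A
  hF := CategoryTheory.Functor.ext (fun e => e.2.2) (fun e₁ e₂ u => by
    show A.p.map (dMap A.hp (eqToHom e₁.2.2 ≫ u.val) ≫ eqToHom (congrArg Subtype.val u.property))
      = eqToHom e₁.2.2 ≫ u.val ≫ eqToHom e₂.2.2.symm
    simp [dMap_p, eqToHom_map])
  hH := CategoryTheory.Functor.ext (fun e => e.2.2) (fun e₁ e₂ u => by
    show A.q.map (dMap A.hq (eqToHom e₁.2.2 ≫ u.val) ≫ eqToHom (congrArg Subtype.val u.property))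
      = eqToHom e₁.2.2 ≫ u.val ≫ eqToHom e₂.2.2.symm
    simp [dMap_p, eqToHom_map])
  ψnat {c₁ c₂ d₁ d₂} f g kk := by
    apply φ_inj A
    rw [phi_psi]
    erw [A.φnat]
    simp only [fibF_obj, fibFD_obj]
    rw [phi_psi]
    show K.map _ (K.map ((f.val.op, g.val) : (op c₁.1, d₁.1) ⟶ (op c₂.1, d₂.1)) kk.val) = _
    rw [← Kmap_comp]
    erw [← Kmap_comp]
    congr 1
    simp [Prod.ext_iff, dMap_p, eqToHom_map, eqToHom_op, fibF, fibFD]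
  hφ e₁ e₂ kk := by
    simp only [fibF_obj, fibFD_obj]
    rw [phi_psi]
    erw [← Kmap_comp]
    erw [eqToHom_trans, eqToHom_trans]
    have h6 : ∀ (h1 : op e₁.1 = op e₁.1) (h2 : e₂.1 = e₂.1),
        K.map ((eqToHom h1, eqToHom h2) : (op e₁.1, e₂.1) ⟶ (op e₁.1, e₂.1)) kk.val
          = kk.val := fun h1 h2 => Kmap_id kk.val
    exact h6 _ _

noncomputable def fibInv : DOpfOverProfHom A (toDOpf (fiberInst A)) where
  F := fibG A
  H := fibGD A
  ψ c' d' k := ⟨A.φ c' d' k, Subtype.ext (lObj_unique A c' (A.q.obj d')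
    (kbar A ⟨c', rfl⟩ (A.φ c' d' k)) k rfl ((Kmap_id _).trans (Kmap_id _).symm))⟩
  hF := CategoryTheory.Functor.ext (fun c' => rfl) (fun _ _ g => by
    show A.p.map g = 𝟙 _ ≫ A.p.map g ≫ 𝟙 _; simp)
  hH := CategoryTheory.Functor.ext (fun d' => rfl) (fun _ _ g => by
    show A.q.map g = 𝟙 _ ≫ A.q.map g ≫ 𝟙 _; simp)
  ψnat f g k := Subtype.ext (A.φnat f g k)
  hφ c' d' k := Kmap_id _

lemma FG_id : fibF A ⋙ fibG A = 𝟭 (fiberFun A.p A.hp).Elements :=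
  CategoryTheory.Functor.ext
    (fun e => by obtain ⟨b, e', he⟩ := e; subst he; rfl)
    (fun e₁ e₂ u => by
      apply CategoryOfElements.ext
      show A.p.map (dMap A.hp (eqToHom e₁.2.2 ≫ u.val)
          ≫ eqToHom (congrArg Subtype.val u.property)) = _
      simp [elements_eqToHom_val, dMap_p, eqToHom_map]
      erw [elements_eqToHom_val, elements_eqToHom_val]
      rfl)

lemma FGD_id : fibFD A ⋙ fibGD A = 𝟭 (fiberFun A.q A.hq).Elements :=
  CategoryTheory.Functor.ext
    (fun e => by obtain ⟨b, e', he⟩ := e; subst he; rfl)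
    (fun e₁ e₂ u => by
      apply CategoryOfElements.ext
      show A.q.map (dMap A.hq (eqToHom e₁.2.2 ≫ u.val)
          ≫ eqToHom (congrArg Subtype.val u.property)) = _
      simp [elements_eqToHom_val', dMap_p, eqToHom_map]
      erw [elements_eqToHom_val', elements_eqToHom_val']
      rfl)

lemma GF_id : fibG A ⋙ fibF A = 𝟭 A.C' :=
  CategoryTheory.Functor.ext (fun c' => rfl) (fun c₁ c₂ g => by
    obtain ⟨he, hm⟩ := d_eq A.hp (eqToHom (rfl : A.p.obj c₁ = A.p.obj c₁) ≫ A.p.map g)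
      g rfl (by simp)
    show dMap A.hp (eqToHom (rfl : A.p.obj c₁ = A.p.obj c₁) ≫ A.p.map g) ≫ eqToHom _ = 𝟙 _ ≫ g ≫ 𝟙 _
    simpa using hm)

lemma GFD_id : fibGD A ⋙ fibFD A = 𝟭 A.D' :=
  CategoryTheory.Functor.ext (fun d' => rfl) (fun d₁ d₂ g => by
    obtain ⟨he, hm⟩ := d_eq A.hq (eqToHom (rfl : A.q.obj d₁ = A.q.obj d₁) ≫ A.q.map g)
      g rfl (by simp)
    show dMap A.hq (eqToHom (rfl : A.q.obj d₁ = A.q.obj d₁) ≫ A.q.map g) ≫ eqToHom _ = 𝟙 _ ≫ g ≫ 𝟙 _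
    simpa using hm)

lemma phi_essSurj : (Phi (K := K)).EssSurj where
  mem_essImage A := ⟨fiberInst A, ⟨{
    hom := fibHom A
    inv := fibInv A
    hom_inv_id := hom_ext _ _ (FG_id A) (FGD_id A)
    inv_hom_id := hom_ext _ _ (GF_id A) (GFD_id A) }⟩⟩

end Iso

end ProfDOpfAux
/-- For every profunctor `K` from `C` to `D`, the category of instances of `K` is equivalent
to the category of discrete opfibrations over `K`. -/
theorem profInstances_equiv_discreteOpfibrations (K : Cᵒᵖ × D ⥤ Type u) :
    Nonempty (ProfInstance K ≌ DOpfOverProf K) := by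
  have : (ProfDOpfAux.Phi (K := K)).IsEquivalence :=
    { full := ProfDOpfAux.phi_full
      faithful := ProfDOpfAux.phi_faithful
      essSurj := ProfDOpfAux.phi_essSurj }
  exact ⟨(ProfDOpfAux.Phi (K := K)).asEquivalence⟩
end

section
/- For every profunctor K from a category C to a category D, the category of instances of K is equivalent to the functor category Coll(K) ⥤ Type, where Coll(K) is the collage of K. -/
open CategoryTheory Opposite

universe u

variable {C D : Type u} [Category.{u} C] [Category.{u} D]

/-- The objects of the collage of a profunctor `K` from `C` to `D`: the disjoint union of the
objects of `C` and of `D`. -/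
def Collage (K : Cᵒᵖ × D ⥤ Type u) : Type u := C ⊕ D

/-- The hom-sets of the collage of `K`. -/
def CollageHom (K : Cᵒᵖ × D ⥤ Type u) : Collage K → Collage K → Type u
  | Sum.inl c, Sum.inl c' => c ⟶ c'
  | Sum.inl c, Sum.inr d => K.obj (op c, d)
  | Sum.inr _, Sum.inl _ => PEmpty
  | Sum.inr d, Sum.inr d' => d ⟶ d'

/-- Identities in the collage. -/
def collageId (K : Cᵒᵖ × D ⥤ Type u) : ∀ x : Collage K, CollageHom K x x
  | Sum.inl c => (𝟙 c : c ⟶ c)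
  | Sum.inr d => (𝟙 d : d ⟶ d)

/-- Composition in the collage, given by composition in `C` and `D` and the two-sided action
of `C` and `D` on `K`. -/
def collageComp (K : Cᵒᵖ × D ⥤ Type u) :
    ∀ {x y z : Collage K}, CollageHom K x y → CollageHom K y z → CollageHom K x z
  | Sum.inl _, Sum.inl _, Sum.inl _, f, g => (f ≫ g : _ ⟶ _)
  | Sum.inl c, Sum.inl c', Sum.inr d, f, k =>
      (K.map (X := (op c', d)) (Y := (op c, d)) (Quiver.Hom.op (f : c ⟶ c'), 𝟙 d) k : K.obj (op c, d))
  | Sum.inl c, Sum.inr d, Sum.inr d', k, g =>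
      (K.map (X := (op c, d)) (Y := (op c, d')) (𝟙 (op c), (g : d ⟶ d')) k : K.obj (op c, d'))
  | Sum.inl _, Sum.inr _, Sum.inl _, _, g => (g : PEmpty).elim
  | Sum.inr _, Sum.inl _, _, f, _ => (f : PEmpty).elim
  | Sum.inr _, Sum.inr _, Sum.inl _, _, g => (g : PEmpty).elim
  | Sum.inr _, Sum.inr _, Sum.inr _, f, g => (f ≫ g : _ ⟶ _)

theorem collage_id_comp (K : Cᵒᵖ × D ⥤ Type u) :
    ∀ {x y : Collage K} (f : CollageHom K x y),
      collageComp K (collageId K x) f = f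
  | Sum.inl _, Sum.inl _, f => Category.id_comp f
  | Sum.inl c, Sum.inr d, k => by
      show K.map (𝟙 (op c, d)) k = k
      exact FunctorToTypes.map_id_apply K k
  | Sum.inr _, Sum.inl _, f => (f : PEmpty).elim
  | Sum.inr _, Sum.inr _, f => Category.id_comp f

theorem collage_comp_id (K : Cᵒᵖ × D ⥤ Type u) :
    ∀ {x y : Collage K} (f : CollageHom K x y),
      collageComp K f (collageId K y) = f
  | Sum.inl _, Sum.inl _, f => Category.comp_id f
  | Sum.inl c, Sum.inr d, k => by
      show K.map (𝟙 (op c, d)) k = k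
      exact FunctorToTypes.map_id_apply K k
  | Sum.inr _, Sum.inl _, f => (f : PEmpty).elim
  | Sum.inr _, Sum.inr _, f => Category.comp_id f

theorem collage_assoc (K : Cᵒᵖ × D ⥤ Type u) :
    ∀ {w x y z : Collage K} (f : CollageHom K w x) (g : CollageHom K x y)
      (h : CollageHom K y z),
      collageComp K (collageComp K f g) h = collageComp K f (collageComp K g h)
  | Sum.inl _, Sum.inl _, Sum.inl _, Sum.inl _, f, g, h => Category.assoc f g h
  | Sum.inl c₁, Sum.inl c₂, Sum.inl c₃, Sum.inr d, f, g, k => by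
      have key : ∀ (f : c₁ ⟶ c₂) (g : c₂ ⟶ c₃) (k : K.obj (op c₃, d)),
          K.map ((Quiver.Hom.op (f ≫ g), 𝟙 d) : (op c₃, d) ⟶ (op c₁, d)) k =
            K.map ((Quiver.Hom.op f, 𝟙 d) : (op c₂, d) ⟶ (op c₁, d))
              (K.map ((Quiver.Hom.op g, 𝟙 d) : (op c₃, d) ⟶ (op c₂, d)) k) := by
        intro f g k
        rw [← FunctorToTypes.map_comp_apply]
        refine congrArg (fun m => K.map m k) ?_
        apply Prod.ext
        · exact op_comp
        · exact (Category.comp_id _).symm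
      exact key f g k
  | Sum.inl _, Sum.inl _, Sum.inr _, Sum.inl _, _, _, h => (h : PEmpty).elim
  | Sum.inl c₁, Sum.inl c₂, Sum.inr d₁, Sum.inr d₂, f, k, g => by
      have key : ∀ (f : c₁ ⟶ c₂) (g : d₁ ⟶ d₂) (k : K.obj (op c₂, d₁)),
          K.map ((𝟙 (op c₁), g) : (op c₁, d₁) ⟶ (op c₁, d₂))
            (K.map ((Quiver.Hom.op f, 𝟙 d₁) : (op c₂, d₁) ⟶ (op c₁, d₁)) k) =
          K.map ((Quiver.Hom.op f, 𝟙 d₂) : (op c₂, d₂) ⟶ (op c₁, d₂))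
            (K.map ((𝟙 (op c₂), g) : (op c₂, d₁) ⟶ (op c₂, d₂)) k) := by
        intro f g k
        rw [← FunctorToTypes.map_comp_apply, ← FunctorToTypes.map_comp_apply]
        refine congrArg (fun m => K.map m k) ?_
        apply Prod.ext <;> simp
      exact key f g k
  | Sum.inl _, Sum.inr _, Sum.inl _, _, _, g, _ => (g : PEmpty).elim
  | Sum.inl _, Sum.inr _, Sum.inr _, Sum.inl _, _, _, h => (h : PEmpty).elim
  | Sum.inl c, Sum.inr d₁, Sum.inr d₂, Sum.inr d₃, k, g, h => by
      have key : ∀ (g : d₁ ⟶ d₂) (h : d₂ ⟶ d₃) (k : K.obj (op c, d₁)),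
          K.map ((𝟙 (op c), h) : (op c, d₂) ⟶ (op c, d₃))
            (K.map ((𝟙 (op c), g) : (op c, d₁) ⟶ (op c, d₂)) k) =
          K.map ((𝟙 (op c), g ≫ h) : (op c, d₁) ⟶ (op c, d₃)) k := by
        intro g h k
        rw [← FunctorToTypes.map_comp_apply]
        refine congrArg (fun m => K.map m k) ?_
        apply Prod.ext
        · exact Category.id_comp _
        · rfl
      exact key g h k
  | Sum.inr _, Sum.inl _, _, _, f, _, _ => (f : PEmpty).elim
  | Sum.inr _, Sum.inr _, Sum.inl _, _, _, g, _ => (g : PEmpty).elim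
  | Sum.inr _, Sum.inr _, Sum.inr _, Sum.inl _, _, _, h => (h : PEmpty).elim
  | Sum.inr _, Sum.inr _, Sum.inr _, Sum.inr _, f, g, h => Category.assoc f g h

/-- The collage of a profunctor `K` from `C` to `D`. -/
instance collageCategory (K : Cᵒᵖ × D ⥤ Type u) : Category.{u} (Collage K) where
  Hom x y := CollageHom K x y
  id x := collageId K x
  comp f g := collageComp K f g
  id_comp f := collage_id_comp K f
  comp_id f := collage_comp_id K f
  assoc f g h := collage_assoc K f g h

namespace CollageEquiv

variable (K : Cᵒᵖ × D ⥤ Type u)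

/-- The inclusion of `C` into the collage. -/
def inclC : C ⥤ Collage K where
  obj c := Sum.inl c
  map {c c'} f := (f : CollageHom K (Sum.inl c) (Sum.inl c'))
  map_id _ := rfl
  map_comp _ _ := rfl

/-- The inclusion of `D` into the collage. -/
def inclD : D ⥤ Collage K where
  obj d := Sum.inr d
  map {d d'} g := (g : CollageHom K (Sum.inr d) (Sum.inr d'))
  map_id _ := rfl
  map_comp _ _ := rfl

/-- An element of `K(c,d)` as a morphism in the collage. -/
def khom {c : C} {d : D} (k : K.obj (op c, d)) :
    (inclC K).obj c ⟶ (inclD K).obj d := k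

/-- A morphism of `C` as a morphism in the collage. -/
def chom {c c' : C} (f : c ⟶ c') :
    (inclC K).obj c ⟶ (inclC K).obj c' := (inclC K).map f

/-- A morphism of `D` as a morphism in the collage. -/
def dhom {d d' : D} (g : d ⟶ d') :
    (inclD K).obj d ⟶ (inclD K).obj d' := (inclD K).map g

/-- A profunctor instance gives a functor on the collage. -/
def toFunctor (I : ProfInstance K) : Collage K ⥤ Type u where
  obj x := match x with
    | Sum.inl c => I.X.obj c
    | Sum.inr d => I.Y.obj d
  map {x y} f := match x, y, f with
    | Sum.inl _, Sum.inl _, f => I.X.map f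
    | Sum.inl _, Sum.inr _, k => TypeCat.ofHom (fun x => I.act x k)
    | Sum.inr _, Sum.inl _, f => f.elim
    | Sum.inr _, Sum.inr _, g => I.Y.map g
  map_id x := by
    cases x with
    | inl c => exact I.X.map_id c
    | inr d => exact I.Y.map_id d
  map_comp {x y z} f g := by
    match x, y, z, f, g with
    | Sum.inl _, Sum.inl _, Sum.inl _, f, g => exact I.X.map_comp f g
    | Sum.inl _, Sum.inl _, Sum.inr _, f, k =>
        ext x; exact (I.map_act f x k).symm
    | Sum.inl _, Sum.inr _, Sum.inr _, k, g =>
        ext x; exact (I.act_map g x k).symm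
    | Sum.inl _, Sum.inr _, Sum.inl _, _, g => exact g.elim
    | Sum.inr _, Sum.inl _, _, f, _ => exact f.elim
    | Sum.inr _, Sum.inr _, Sum.inl _, _, g => exact g.elim
    | Sum.inr _, Sum.inr _, Sum.inr _, f, g => exact I.Y.map_comp f g

/-- The functor from instances to collage functors. -/
def instToFun : ProfInstance K ⥤ (Collage K ⥤ Type u) where
  obj I := toFunctor K I
  map {I J} f :=
    { app := fun x => match x with
        | Sum.inl c => f.1.1.app c
        | Sum.inr d => f.1.2.app d
      naturality := by
        rintro (c | d) (c' | d') g
        · exact f.1.1.naturality g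
        · ext x; exact f.2 x g
        · exact g.elim
        · exact f.1.2.naturality g }
  map_id I := by
    apply NatTrans.ext; funext x; cases x <;> rfl
  map_comp f g := by
    apply NatTrans.ext; funext x; cases x <;> rfl

/-- The functor from collage functors to instances. -/
def funToInst : (Collage K ⥤ Type u) ⥤ ProfInstance K where
  obj F :=
    { X := inclC K ⋙ F
      Y := inclD K ⋙ F
      act := fun {c d} x k => F.map (khom K k) x
      act_map := fun {c d d'} g x k =>
        (FunctorToTypes.map_comp_apply F (khom K k) (dhom K g) x).symm
      map_act := fun {c c' d} f x k =>
        (FunctorToTypes.map_comp_apply F (chom K f) (khom K k) x).symm }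
  map {F G} α :=
    ⟨(Functor.whiskerLeft (inclC K) α, Functor.whiskerLeft (inclD K) α),
      fun {c d} x k => NatTrans.naturality_apply α (khom K k) x⟩
  map_id _ := rfl
  map_comp _ _ := rfl

/-- The unit component. -/
def unitApp (I : ProfInstance K) : I ≅ (funToInst K).obj ((instToFun K).obj I) where
  hom := ⟨({ app := fun c => TypeCat.ofHom (id : I.X.obj c → I.X.obj c),
             naturality := fun _ _ _ => rfl },
           { app := fun d => TypeCat.ofHom (id : I.Y.obj d → I.Y.obj d),
             naturality := fun _ _ _ => rfl }),
          fun _ _ => rfl⟩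
  inv := ⟨({ app := fun c => TypeCat.ofHom (id : I.X.obj c → I.X.obj c),
             naturality := fun _ _ _ => rfl },
           { app := fun d => TypeCat.ofHom (id : I.Y.obj d → I.Y.obj d),
             naturality := fun _ _ _ => rfl }),
          fun _ _ => rfl⟩
  hom_inv_id := rfl
  inv_hom_id := rfl

/-- The counit component. -/
def counitApp (F : Collage K ⥤ Type u) :
    (instToFun K).obj ((funToInst K).obj F) ≅ F where
  hom :=
    { app := fun x => match x with
        | Sum.inl c => TypeCat.ofHom (id : F.obj (Sum.inl c) → F.obj (Sum.inl c))
        | Sum.inr d => TypeCat.ofHom (id : F.obj (Sum.inr d) → F.obj (Sum.inr d))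
      naturality := by
        rintro (c | d) (c' | d') f
        · rfl
        · rfl
        · exact f.elim
        · rfl }
  inv :=
    { app := fun x => match x with
        | Sum.inl c => TypeCat.ofHom (id : F.obj (Sum.inl c) → F.obj (Sum.inl c))
        | Sum.inr d => TypeCat.ofHom (id : F.obj (Sum.inr d) → F.obj (Sum.inr d))
      naturality := by
        rintro (c | d) (c' | d') f
        · rfl
        · rfl
        · exact f.elim
        · rfl }
  hom_inv_id := by apply NatTrans.ext; funext x; cases x <;> rfl
  inv_hom_id := by apply NatTrans.ext; funext x; cases x <;> rfl

/-- The equivalence between instances of `K` and functors on the collage. -/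
def equiv : ProfInstance K ≌ (Collage K ⥤ Type u) :=
  CategoryTheory.Equivalence.mk (instToFun K) (funToInst K)
    (NatIso.ofComponents (unitApp K) (fun {I J} f => rfl))
    (NatIso.ofComponents (counitApp K) (fun {F G} α => by
      apply NatTrans.ext; funext x; cases x <;> rfl))

end CollageEquiv

/-- For every profunctor `K` from `C` to `D`, the category of instances of `K` is equivalent
to the category of functors from the collage of `K` to `Type`. -/
theorem profInstances_equiv_collageFunctors (K : Cᵒᵖ × D ⥤ Type u) :
    Nonempty (ProfInstance K ≌ (Collage K ⥤ Type u)) := by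
  exact ⟨CollageEquiv.equiv K⟩
end

section
/- For every category B, the full subcategory of the slice category of Cat over B spanned by the discrete opfibrations into B is reflective: its inclusion functor admits a left adjoint. Here the slice category has as objects functors a : A ⥤ B and as morphisms (A,a) → (A',a') the functors F : A ⥤ A' with F ⋙ a' = a. -/
open CategoryTheory

universe u

namespace DiscOpfibProof

section Basic

variable {E B : Type*} [Category E] [Category B] {p : E ⥤ B}

theorem lift_unique (hp : IsDiscreteOpfib p) {e : E} {b : B} {f : p.obj e ⟶ b}
    {e₁ e₂ : E} (g₁ : e ⟶ e₁) (g₂ : e ⟶ e₂)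
    (h₁ : p.obj e₁ = b) (h₂ : p.obj e₂ = b)
    (hg₁ : p.map g₁ ≫ eqToHom h₁ = f) (hg₂ : p.map g₂ ≫ eqToHom h₂ = f) :
    (⟨e₁, g₁⟩ : Σ e', e ⟶ e') = ⟨e₂, g₂⟩ := by
  obtain ⟨w, _, huniq⟩ := hp f
  exact (huniq ⟨e₁, g₁⟩ ⟨h₁, hg₁⟩).trans (huniq ⟨e₂, g₂⟩ ⟨h₂, hg₂⟩).symm

theorem dhom_ext (hp : IsDiscreteOpfib p) {e e' : E} {g₁ g₂ : e ⟶ e'}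
    (h : p.map g₁ = p.map g₂) : g₁ = g₂ := by
  have := lift_unique hp (f := p.map g₂ ≫ eqToHom rfl) g₁ g₂ rfl rfl
    (by simpa using h) rfl
  exact eq_of_heq (Sigma.mk.inj_iff.mp this).2

noncomputable def liftObj (hp : IsDiscreteOpfib p) {e : E} {b : B} (f : p.obj e ⟶ b) : E :=
  (hp f).exists.choose.1

noncomputable def liftMap (hp : IsDiscreteOpfib p) {e : E} {b : B} (f : p.obj e ⟶ b) :
    e ⟶ liftObj hp f :=
  (hp f).exists.choose.2

theorem liftObj_p (hp : IsDiscreteOpfib p) {e : E} {b : B} (f : p.obj e ⟶ b) :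
    p.obj (liftObj hp f) = b :=
  (hp f).exists.choose_spec.choose

theorem liftMap_p (hp : IsDiscreteOpfib p) {e : E} {b : B} (f : p.obj e ⟶ b) :
    p.map (liftMap hp f) ≫ eqToHom (liftObj_p hp f) = f :=
  (hp f).exists.choose_spec.choose_spec

/-- Any lift of `f` agrees with the chosen lift. -/
theorem lift_eq (hp : IsDiscreteOpfib p) {e : E} {b : B} (f : p.obj e ⟶ b)
    {e₁ : E} (g₁ : e ⟶ e₁) (h₁ : p.obj e₁ = b) (hg₁ : p.map g₁ ≫ eqToHom h₁ = f) :
    (⟨e₁, g₁⟩ : Σ e', e ⟶ e') = ⟨liftObj hp f, liftMap hp f⟩ :=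
  lift_unique hp g₁ (liftMap hp f) h₁ (liftObj_p hp f) hg₁ (liftMap_p hp f)

theorem liftObj_eq (hp : IsDiscreteOpfib p) {e : E} {b : B} (f : p.obj e ⟶ b)
    {e₁ : E} (g₁ : e ⟶ e₁) (h₁ : p.obj e₁ = b) (hg₁ : p.map g₁ ≫ eqToHom h₁ = f) :
    e₁ = liftObj hp f :=
  congrArg Sigma.fst (lift_eq hp f g₁ h₁ hg₁)

theorem elements_opfib {C : Type*} [Category C] (F : C ⥤ Type*) :
    IsDiscreteOpfib (CategoryOfElements.π F) := by
  rintro ⟨c, x⟩ b f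
  refine ⟨⟨⟨b, F.map f x⟩, ⟨f, rfl⟩⟩, ⟨rfl, by exact Category.comp_id f⟩, ?_⟩
  intro y hy
  obtain ⟨⟨b', x'⟩, m⟩ := y
  obtain ⟨h, hh⟩ := hy
  change b' = b at h
  subst h
  have hv : m.val = f := (Category.comp_id _).symm.trans hh
  have hx : x' = F.map f x := by rw [← hv]; exact m.prop.symm
  subst hx
  congr 1
  exact Subtype.ext hv

end Basic

section Construction

variable {B : Type u} [Category.{u} B] {A : Type u} [Category.{u} A] (a : A ⥤ B)

/-- The generating relation for connected components of comma categories. -/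
def Rel (b : B) (x y : Σ a' : A, a.obj a' ⟶ b) : Prop :=
  ∃ h : x.1 ⟶ y.1, a.map h ≫ y.2 = x.2

/-- The functor `B ⥤ Type u` whose category of elements is the reflection of `a`. -/
def Fof : B ⥤ Type u where
  obj b := Quot (Rel a b)
  map {b b'} g := TypeCat.ofHom (Quot.lift
    (fun s : Σ a' : A, a.obj a' ⟶ b => Quot.mk (Rel a b') ⟨s.1, s.2 ≫ g⟩)
    (by
      rintro x y ⟨h, hh⟩
      exact Quot.sound ⟨h, by rw [← Category.assoc, hh]⟩))
  map_id b := by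
    ext x
    induction x using Quot.ind with
    | mk s =>
      obtain ⟨a', f⟩ := s
      show Quot.mk (Rel a b) ⟨a', f ≫ 𝟙 b⟩ = Quot.mk (Rel a b) ⟨a', f⟩
      rw [Category.comp_id]
  map_comp {b₁ b₂ b₃} g₁ g₂ := by
    ext x
    induction x using Quot.ind with
    | mk s =>
      obtain ⟨a', f⟩ := s
      show Quot.mk (Rel a b₃) ⟨a', f ≫ (g₁ ≫ g₂)⟩ = Quot.mk (Rel a b₃) ⟨a', (f ≫ g₁) ≫ g₂⟩
      rw [Category.assoc]

theorem Fof_map_mk {b b' : B} (g : b ⟶ b') (s : Σ a' : A, a.obj a' ⟶ b) :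
    (Fof a).map g (Quot.mk (Rel a b) s) = Quot.mk (Rel a b') ⟨s.1, s.2 ≫ g⟩ :=
  rfl

/-- The unit functor into the category of elements. -/
def unitF : A ⥤ (Fof a).Elements where
  obj a' := ⟨a.obj a', Quot.mk (Rel a (a.obj a')) ⟨a', 𝟙 _⟩⟩
  map {a₁ a₂} h := ⟨a.map h, by
    have : Quot.mk (Rel a (a.obj a₂)) ⟨a₁, 𝟙 _ ≫ a.map h⟩
        = Quot.mk (Rel a (a.obj a₂)) ⟨a₂, 𝟙 _⟩ :=
      Quot.sound ⟨h, by simp⟩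
    exact this⟩
  map_id a' := by apply Subtype.ext; simp; rfl
  map_comp h₁ h₂ := by apply Subtype.ext; simp; rfl

@[simp] theorem unitF_obj (a' : A) :
    (unitF a).obj a' = ⟨a.obj a', Quot.mk (Rel a (a.obj a')) ⟨a', 𝟙 _⟩⟩ := rfl

@[simp] theorem unitF_map_val {a₁ a₂ : A} (h : a₁ ⟶ a₂) :
    ((unitF a).map h).val = a.map h := rfl


theorem unitF_pi : unitF a ⋙ CategoryOfElements.π (Fof a) = a :=
  CategoryTheory.Functor.ext (fun _ => rfl) (fun _ _ h => by show a.map h = 𝟙 _ ≫ a.map h ≫ 𝟙 _; simp)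

variable {E' : Type*} [Category E'] {p : E' ⥤ B}

/-- `p.obj (G.obj a') = a.obj a'`. -/
theorem pG {G : A ⥤ E'} (hG : G ⋙ p = a) (a' : A) : p.obj (G.obj a') = a.obj a' :=
  Functor.congr_obj hG a'

variable (hp : IsDiscreteOpfib p) {G : A ⥤ E'} (hG : G ⋙ p = a)

/-- The object part of the induced functor, on representatives. -/
noncomputable def L0 {b : B} (s : Σ a' : A, a.obj a' ⟶ b) : E' :=
  liftObj hp (eqToHom (pG a hG s.1) ≫ s.2)

theorem L0_sound {b : B} {x y : Σ a' : A, a.obj a' ⟶ b} (r : Rel a b x y) :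
    L0 a hp hG x = L0 a hp hG y := by
  obtain ⟨h, hh⟩ := r
  refine (liftObj_eq hp (eqToHom (pG a hG x.1) ≫ x.2)
    (G.map h ≫ liftMap hp (eqToHom (pG a hG y.1) ≫ y.2))
    (liftObj_p hp _) ?_).symm
  have hph : p.map (G.map h) = eqToHom (pG a hG x.1) ≫ a.map h ≫ eqToHom (pG a hG y.1).symm :=
    Functor.congr_hom hG h
  rw [Functor.map_comp, Category.assoc, liftMap_p hp _, hph]
  simp [hh]

/-- Object part of the induced functor. -/
noncomputable def Hobj (e : (Fof a).Elements) : E' :=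
  Quot.lift (fun s => L0 a hp hG s) (fun _ _ r => L0_sound a hp hG r) e.2

theorem Hobj_mk {b : B} (s : Σ a' : A, a.obj a' ⟶ b) :
    Hobj a hp hG ⟨b, Quot.mk (Rel a b) s⟩ = L0 a hp hG s := rfl

theorem Hobj_p (e : (Fof a).Elements) : p.obj (Hobj a hp hG e) = e.1 := by
  obtain ⟨b, x⟩ := e
  induction x using Quot.ind with
  | mk s => exact liftObj_p hp _

theorem Hhom_exists (e₁ : (Fof a).Elements) {b₂ : B} {x₂ : (Fof a).obj b₂}
    (g : e₁.1 ⟶ b₂) (hg : (Fof a).map g e₁.2 = x₂) :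
    ∃ k : Hobj a hp hG e₁ ⟶ Hobj a hp hG ⟨b₂, x₂⟩,
      p.map k = eqToHom (Hobj_p a hp hG e₁) ≫ g ≫ eqToHom (Hobj_p a hp hG ⟨b₂, x₂⟩).symm := by
  subst hg
  obtain ⟨b₁, x₁⟩ := e₁
  induction x₁ using Quot.ind with
  | mk s =>
    obtain ⟨a₀, f₀⟩ := s
    set f₁ : p.obj (G.obj a₀) ⟶ b₁ := eqToHom (pG a hG a₀) ≫ f₀ with hf₁
    have hq : liftObj hp (eqToHom (liftObj_p hp f₁) ≫ g)
        = Hobj a hp hG ⟨b₂, (Fof a).map g (Quot.mk (Rel a b₁) ⟨a₀, f₀⟩)⟩ := by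
      rw [Fof_map_mk, Hobj_mk]
      refine liftObj_eq hp (eqToHom (pG a hG a₀) ≫ f₀ ≫ g)
        (liftMap hp f₁ ≫ liftMap hp (eqToHom (liftObj_p hp f₁) ≫ g))
        (liftObj_p hp _) ?_
      rw [Functor.map_comp, Category.assoc, liftMap_p hp _, ← Category.assoc,
        liftMap_p hp f₁]
      simp [hf₁]
    refine ⟨liftMap hp (eqToHom (liftObj_p hp f₁) ≫ g) ≫ eqToHom hq, ?_⟩
    have h₂ : p.map (liftMap hp (eqToHom (liftObj_p hp f₁) ≫ g))
        = (eqToHom (liftObj_p hp f₁) ≫ g) ≫ eqToHom (liftObj_p hp _).symm :=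
      (comp_eqToHom_iff _ _ _).mp (liftMap_p hp (eqToHom (liftObj_p hp f₁) ≫ g))
    erw [Functor.map_comp, h₂, eqToHom_map, Category.assoc, Category.assoc, eqToHom_trans]
    rfl

/-- The induced functor. -/
noncomputable def Hfun : (Fof a).Elements ⥤ E' where
  obj e := Hobj a hp hG e
  map {e₁ e₂} m := (Hhom_exists a hp hG e₁ (Subtype.val m) (Subtype.prop m)).choose
  map_id e := by
    apply dhom_ext hp
    erw [(Hhom_exists a hp hG e (Subtype.val (𝟙 e)) (Subtype.prop (𝟙 e))).choose_spec,
      CategoryTheory.Functor.map_id, CategoryOfElements.id_val, Category.id_comp, eqToHom_trans, eqToHom_refl]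
  map_comp {e₁ e₂ e₃} m₁ m₂ := by
    apply dhom_ext hp
    erw [Functor.map_comp, (Hhom_exists a hp hG e₁ (Subtype.val (m₁ ≫ m₂)) (Subtype.prop (m₁ ≫ m₂))).choose_spec,
      (Hhom_exists a hp hG e₁ (Subtype.val m₁) (Subtype.prop m₁)).choose_spec,
      (Hhom_exists a hp hG e₂ (Subtype.val m₂) (Subtype.prop m₂)).choose_spec]
    erw [CategoryOfElements.comp_val, Category.assoc, Category.assoc, Category.assoc,
      eqToHom_trans_assoc, eqToHom_refl, Category.id_comp]

theorem Hfun_map_p {e₁ e₂ : (Fof a).Elements} (m : e₁ ⟶ e₂) :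
    p.map ((Hfun a hp hG).map m)
      = eqToHom (Hobj_p a hp hG e₁) ≫ m.val ≫ eqToHom (Hobj_p a hp hG e₂).symm :=
  (Hhom_exists a hp hG e₁ (Subtype.val m) (Subtype.prop m)).choose_spec

theorem Hfun_p : Hfun a hp hG ⋙ p = CategoryOfElements.π (Fof a) := by
  refine CategoryTheory.Functor.ext (fun e => Hobj_p a hp hG e) ?_
  intro e₁ e₂ m
  exact Hfun_map_p a hp hG m

theorem unitF_Hfun : unitF a ⋙ Hfun a hp hG = G := by
  have hobj : ∀ a' : A, (unitF a ⋙ Hfun a hp hG).obj a' = G.obj a' := by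
    intro a'
    exact (liftObj_eq hp (eqToHom (pG a hG a') ≫ 𝟙 _) (𝟙 (G.obj a')) (pG a hG a')
      (by simp)).symm
  refine CategoryTheory.Functor.ext hobj ?_
  intro a₁ a₂ h
  apply dhom_ext hp
  have hph : p.map (G.map h) = eqToHom (pG a hG a₁) ≫ a.map h ≫ eqToHom (pG a hG a₂).symm :=
    Functor.congr_hom hG h
  have lhs := Hfun_map_p a hp hG ((unitF a).map h)
  rw [unitF_map_val] at lhs
  rw [Functor.comp_map, lhs, Functor.map_comp, Functor.map_comp, hph, eqToHom_map, eqToHom_map]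
  simp only [Category.assoc, eqToHom_trans, eqToHom_trans_assoc]
  rfl

theorem obj_det {K : (Fof a).Elements ⥤ E'} (hK1 : K ⋙ p = CategoryOfElements.π (Fof a))
    (hK2 : unitF a ⋙ K = G) (b : B) (a₀ : A) (f₀ : a.obj a₀ ⟶ b) :
    K.obj ⟨b, Quot.mk (Rel a b) ⟨a₀, f₀⟩⟩ = L0 a hp hG ⟨a₀, f₀⟩ := by
  let mf : (unitF a).obj a₀ ⟶ (⟨b, Quot.mk (Rel a b) ⟨a₀, f₀⟩⟩ : (Fof a).Elements) :=
    ⟨f₀, by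
      have : Quot.mk (Rel a b) ⟨a₀, 𝟙 _ ≫ f₀⟩ = Quot.mk (Rel a b) ⟨a₀, f₀⟩ := by
        rw [Category.id_comp]
      exact this⟩
  have hobj1 : K.obj ((unitF a).obj a₀) = G.obj a₀ := Functor.congr_obj hK2 a₀
  have he : p.obj (K.obj ⟨b, Quot.mk (Rel a b) ⟨a₀, f₀⟩⟩) = b :=
    Functor.congr_obj hK1 ⟨b, Quot.mk (Rel a b) ⟨a₀, f₀⟩⟩
  refine liftObj_eq hp (eqToHom (pG a hG a₀) ≫ f₀) (eqToHom hobj1.symm ≫ K.map mf) he ?_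
  have hKm : p.map (K.map mf) = eqToHom (Functor.congr_obj hK1 ((unitF a).obj a₀)) ≫ f₀
      ≫ eqToHom he.symm := Functor.congr_hom hK1 mf
  rw [Functor.map_comp, eqToHom_map, hKm]
  simp only [Category.assoc, eqToHom_trans, eqToHom_trans_assoc]
  erw [Category.assoc, eqToHom_trans, eqToHom_refl, Category.comp_id]
  rfl

include hp hG in
theorem functor_unique {K₁ K₂ : (Fof a).Elements ⥤ E'}
    (h1 : K₁ ⋙ p = CategoryOfElements.π (Fof a)) (h2 : unitF a ⋙ K₁ = G)
    (h1' : K₂ ⋙ p = CategoryOfElements.π (Fof a)) (h2' : unitF a ⋙ K₂ = G) :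
    K₁ = K₂ := by
  have hobj : ∀ e, K₁.obj e = K₂.obj e := by
    rintro ⟨b, x⟩
    induction x using Quot.ind with
    | mk s =>
      obtain ⟨a₀, f₀⟩ := s
      rw [obj_det a hp hG h1 h2 b a₀ f₀, obj_det a hp hG h1' h2' b a₀ f₀]
  refine CategoryTheory.Functor.ext hobj ?_
  intro e₁ e₂ m
  apply dhom_ext hp
  have c₁ := Functor.congr_hom h1 m
  have c₂ := Functor.congr_hom h1' m
  rw [Functor.comp_map] at c₁ c₂
  rw [c₁, Functor.map_comp, Functor.map_comp, eqToHom_map, eqToHom_map, c₂]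
  simp only [Category.assoc, eqToHom_trans, eqToHom_trans_assoc]

end Construction

end DiscOpfibProof

/-- The full subcategory of the slice of `Cat` over `B` spanned by the discrete opfibrations
is reflective: the inclusion admits a left adjoint. -/
theorem discreteOpfibrations_reflective (B : Type u) [Category.{u} B] :
    (ObjectProperty.ι
      (fun f : Over (Cat.of B) => IsDiscreteOpfib f.hom.toFunctor)).IsRightAdjoint := by
  have : ∀ X : Over (Cat.of B), Limits.HasInitial (StructuredArrow X
      (ObjectProperty.ι (fun f : Over (Cat.of B) => IsDiscreteOpfib f.hom.toFunctor))) := by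
    intro X
    let a : ↑X.left ⥤ B := X.hom.toFunctor
    let LX : ObjectProperty.FullSubcategory
        (fun f : Over (Cat.of B) => IsDiscreteOpfib f.hom.toFunctor) :=
      ⟨Over.mk
        (show Cat.of ((DiscOpfibProof.Fof a).Elements) ⟶ Cat.of B from
          (CategoryOfElements.π (DiscOpfibProof.Fof a)).toCatHom),
        DiscOpfibProof.elements_opfib _⟩
    let Z : StructuredArrow X
        (ObjectProperty.ι (fun f : Over (Cat.of B) => IsDiscreteOpfib f.hom.toFunctor)) :=
      StructuredArrow.mk (Y := LX)
        (Over.homMk (show X.left ⟶ Cat.of ((DiscOpfibProof.Fof a).Elements) from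
          (DiscOpfibProof.unitF a).toCatHom) (Cat.ext (DiscOpfibProof.unitF_pi a)))
    have hZ : Limits.IsInitial Z := by
      refine Limits.IsInitial.ofUniqueHom (fun T => ?_) (fun T m => ?_)
      case refine_1 =>
        have hp : IsDiscreteOpfib (show ↑T.right.obj.left ⥤ B from T.right.obj.hom.toFunctor) :=
          T.right.property
        have hG : (show ↑X.left ⥤ ↑T.right.obj.left from T.hom.left.toFunctor) ⋙
            (show ↑T.right.obj.left ⥤ B from T.right.obj.hom.toFunctor) = a :=
          congrArg Cat.Hom.toFunctor (Over.w T.hom)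
        refine StructuredArrow.homMk (ObjectProperty.homMk
          (Over.homMk (show Cat.of ((DiscOpfibProof.Fof a).Elements) ⟶ T.right.obj.left from
            (DiscOpfibProof.Hfun a hp hG).toCatHom) (Cat.ext (DiscOpfibProof.Hfun_p a hp hG)))) ?_
        apply Over.OverMorphism.ext
        exact Cat.ext (DiscOpfibProof.unitF_Hfun a hp hG)
      case refine_2 =>
        have hp : IsDiscreteOpfib (show ↑T.right.obj.left ⥤ B from T.right.obj.hom.toFunctor) :=
          T.right.property
        have hG : (show ↑X.left ⥤ ↑T.right.obj.left from T.hom.left.toFunctor) ⋙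
            (show ↑T.right.obj.left ⥤ B from T.right.obj.hom.toFunctor) = a :=
          congrArg Cat.Hom.toFunctor (Over.w T.hom)
        apply StructuredArrow.hom_ext
        apply ObjectProperty.hom_ext
        apply Over.OverMorphism.ext
        apply Cat.ext
        have h1 : (show ((DiscOpfibProof.Fof a).Elements) ⥤ ↑T.right.obj.left from
            m.right.hom.left.toFunctor) ⋙ (show ↑T.right.obj.left ⥤ B from T.right.obj.hom.toFunctor)
            = CategoryOfElements.π (DiscOpfibProof.Fof a) :=
          congrArg Cat.Hom.toFunctor (Over.w m.right.hom)
        have h2 : DiscOpfibProof.unitF a ⋙ (show ((DiscOpfibProof.Fof a).Elements) ⥤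
            ↑T.right.obj.left from m.right.hom.left.toFunctor)
            = (show ↑X.left ⥤ ↑T.right.obj.left from T.hom.left.toFunctor) :=
          congrArg (fun k => k.left.toFunctor) (StructuredArrow.w m)
        exact DiscOpfibProof.functor_unique a hp hG h1 h2
          (DiscOpfibProof.Hfun_p a hp hG) (DiscOpfibProof.unitF_Hfun a hp hG)
    exact hZ.hasInitial
  exact CategoryTheory.isRightAdjointOfStructuredArrowInitials _
end

section
/- Let C be a category. In the slice category of Cat over C (objects: functors a : A ⥤ C; morphisms (A,a) → (B,b): functors F : A ⥤ B with F ⋙ b = a), the class of morphisms whose underlying functor is initial and the class of morphisms whose underlying functor is a discrete opfibration form an orthogonal factorization system: every morphism of the slice factors as a morphism of the first class followed by one of the second, and for every morphism u of the first class and p of the second, every strictly commuting square from u to p in the slice admits a unique diagonal filler (a functor over C making both triangles commute strictly). -/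
open CategoryTheory

universe u

namespace CFS

universe v₁ v₂ v₃ v₄ u₁ u₂ u₃ u₄

variable {A : Type u₁} [Category.{v₁} A] {B : Type u₂} [Category.{v₂} B]

/-- Pushforward on connected components of costructured-arrow categories. -/
def push (F : A ⥤ B) {b b' : B} (f : b ⟶ b') :
    ConnectedComponents (CostructuredArrow F b) → ConnectedComponents (CostructuredArrow F b') :=
  (CostructuredArrow.map f).mapConnectedComponents

lemma push_mk (F : A ⥤ B) {b b' : B} (f : b ⟶ b') (j : CostructuredArrow F b) :
    push F f (Quotient.mk _ j) = Quotient.mk _ (CostructuredArrow.mk (j.hom ≫ f)) := rfl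

lemma push_id (F : A ⥤ B) {b : B} (x : ConnectedComponents (CostructuredArrow F b)) :
    push F (𝟙 b) x = x := by
  induction x using Quotient.inductionOn with
  | h j =>
    rw [push_mk]
    conv_rhs => rw [CostructuredArrow.eq_mk j]
    congr 2
    exact Category.comp_id _

lemma push_comp (F : A ⥤ B) {b b' b'' : B} (f : b ⟶ b') (g : b' ⟶ b'')
    (x : ConnectedComponents (CostructuredArrow F b)) :
    push F (f ≫ g) x = push F g (push F f x) := by
  induction x using Quotient.inductionOn with
  | h j => rw [push_mk, push_mk, push_mk]; congr 1; simp

/-- The middle category of the comprehensive factorization of `F`. -/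
structure Fact (F : A ⥤ B) : Type max u₁ u₂ v₂ where
  pt : B
  cc : ConnectedComponents (CostructuredArrow F pt)

variable {F : A ⥤ B}

instance : Category.{v₂} (Fact F) where
  Hom z z' := { f : z.pt ⟶ z'.pt // push F f z.cc = z'.cc }
  id z := ⟨𝟙 z.pt, push_id F z.cc⟩
  comp f g := ⟨f.1 ≫ g.1, by rw [push_comp, f.2, g.2]⟩
  id_comp f := by apply Subtype.ext; simp
  comp_id f := by apply Subtype.ext; simp
  assoc f g h := by apply Subtype.ext; simp

@[simp] lemma fact_comp_coe {x y z : Fact F} (f : x ⟶ y) (g : y ⟶ z) :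
    (f ≫ g).1 = f.1 ≫ g.1 := rfl

@[simp] lemma fact_id_coe (x : Fact F) : (𝟙 x : x ⟶ x).1 = 𝟙 x.pt := rfl

/-- Projection from the factorization category. -/
def factProj (F : A ⥤ B) : Fact F ⥤ B where
  obj := Fact.pt
  map f := f.1

/-- Inclusion into the factorization category. -/
def factIncl (F : A ⥤ B) : A ⥤ Fact F where
  obj a := ⟨F.obj a, Quotient.mk _ (CostructuredArrow.mk (𝟙 (F.obj a)))⟩
  map {a a'} g := ⟨F.map g, by
    rw [push_mk]
    exact Quotient.sound (Zigzag.of_hom (CostructuredArrow.homMk g (by simp)))⟩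
  map_id a := by apply Subtype.ext; simp
  map_comp f g := by apply Subtype.ext; simp

lemma factIncl_comp_factProj (F : A ⥤ B) : factIncl F ⋙ factProj F = F := rfl

lemma factProj_opfib (F : A ⥤ B) :
    ∀ ⦃e : Fact F⦄ ⦃b : B⦄ (f : (factProj F).obj e ⟶ b),
      ∃! eg : Σ e' : Fact F, e ⟶ e',
        ∃ h : (factProj F).obj eg.1 = b, (factProj F).map eg.2 ≫ eqToHom h = f := by
  rintro ⟨bz, x⟩ b f
  refine ⟨⟨⟨b, push F f x⟩, ⟨f, rfl⟩⟩, ⟨rfl, by simp [factProj]; exact Category.comp_id _⟩, ?_⟩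
  rintro ⟨⟨b', x'⟩, g⟩ ⟨h, hf⟩
  obtain rfl : b' = b := h
  have hgv : g.1 = f := by simpa [factProj] using hf
  have hx : x' = push F f x := by rw [← hgv]; exact g.2.symm
  subst hx
  congr 1
  exact Subtype.ext hgv


lemma push_id_comp (F : A ⥤ B) {a : A} {b : B} (f : F.obj a ⟶ b) :
    push F f (Quotient.mk _ (CostructuredArrow.mk (𝟙 (F.obj a)))) =
      Quotient.mk _ (CostructuredArrow.mk f) := by
  rw [push_mk]
  congr 2
  exact Category.id_comp _

variable (F) in
/-- Objects of the comma category of the inclusion into the factorization. -/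
def inclObj {z : Fact F} (k : CostructuredArrow F z.pt)
    (hk : Quotient.mk _ k = z.cc) : CostructuredArrow (factIncl F) z :=
  CostructuredArrow.mk (Y := k.left)
    (⟨k.hom, by
      show push F k.hom (Quotient.mk _ (CostructuredArrow.mk (𝟙 (F.obj k.left)))) = z.cc
      rw [push_id_comp]; rw [← CostructuredArrow.eq_mk k]; exact hk⟩ :
      (factIncl F).obj k.left ⟶ z)

variable (F) in
/-- Morphisms between such objects. -/
def inclMap {z : Fact F} {k k' : CostructuredArrow F z.pt} (m : k ⟶ k')
    (hk : Quotient.mk _ k = z.cc) (hk' : Quotient.mk _ k' = z.cc) :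
    inclObj F k hk ⟶ inclObj F k' hk' :=
  CostructuredArrow.homMk m.left (by
    apply Subtype.ext
    show F.map m.left ≫ k'.hom = k.hom
    exact CostructuredArrow.w m)

lemma zigzag_incl (F : A ⥤ B) {z : Fact F} {k k' : CostructuredArrow F z.pt} (h : Zigzag k k')
    (hk : Quotient.mk _ k = z.cc) :
    ∀ hk', Zigzag (inclObj F k hk) (inclObj F k' hk') := by
  induction h with
  | refl => intro hk'; exact Zigzag.refl _
  | tail hz hzag ih =>
    intro hk'
    have hmid := (Quot.sound (Zigzag.of_zag hzag)).trans hk'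
    refine (ih hmid).trans (Zigzag.of_zag ?_)
    cases hzag with
    | inl hne => exact Or.inl ⟨inclMap F hne.some hmid hk'⟩
    | inr hne => exact Or.inr ⟨inclMap F hne.some hk' hmid⟩

lemma obj_cc (F : A ⥤ B) {z : Fact F} (O : CostructuredArrow (factIncl F) z) :
    Quotient.mk _ (CostructuredArrow.mk O.hom.1) = z.cc :=
  (push_id_comp F O.hom.1).symm.trans O.hom.2

lemma obj_eq_inclObj (F : A ⥤ B) {z : Fact F} (O : CostructuredArrow (factIncl F) z) :
    O = inclObj F (CostructuredArrow.mk O.hom.1) (obj_cc F O) := by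
  conv_lhs => rw [CostructuredArrow.eq_mk O]
  exact congrArg CostructuredArrow.mk (Subtype.ext rfl)

lemma factIncl_initial (F : A ⥤ B) : (factIncl F).Initial := by
  constructor
  intro z
  have hne : Nonempty (CostructuredArrow (factIncl F) z) := by
    obtain ⟨k, hk⟩ := Quotient.exists_rep z.cc
    exact ⟨inclObj F k hk⟩
  haveI := hne
  apply zigzag_isConnected
  intro O O'
  have zz : Zigzag (CostructuredArrow.mk O.hom.1) (CostructuredArrow.mk O'.hom.1) :=
    Quotient.exact ((obj_cc F O).trans (obj_cc F O').symm)
  rw [obj_eq_inclObj F O, obj_eq_inclObj F O']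
  exact zigzag_incl F zz _ _



section Ortho
variable {A : Type u₁} [Category.{v₁} A] {B : Type u₂} [Category.{v₂} B]
  {E : Type u₃} [Category.{v₃} E] {Fc : Type u₄} [Category.{v₄} Fc]
  {P : E ⥤ Fc} {U : A ⥤ B} {T : A ⥤ E} {S : B ⥤ Fc}

lemma sigma_hom_eq {e : E} {x y : Σ e', e ⟶ e'} (h : x = y) :
    ∃ h1 : x.1 = y.1, x.2 ≫ eqToHom h1 = y.2 := by
  subst h; exact ⟨rfl, by simp⟩

noncomputable def liftO (hP : IsDiscreteOpfib P) {e : E} {b : Fc} (f : P.obj e ⟶ b) : E :=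
  (hP f).choose.1

noncomputable def liftM (hP : IsDiscreteOpfib P) {e : E} {b : Fc} (f : P.obj e ⟶ b) :
    e ⟶ liftO hP f :=
  (hP f).choose.2

lemma liftP (hP : IsDiscreteOpfib P) {e : E} {b : Fc} (f : P.obj e ⟶ b) :
    P.obj (liftO hP f) = b :=
  (hP f).choose_spec.1.choose

lemma liftW (hP : IsDiscreteOpfib P) {e : E} {b : Fc} (f : P.obj e ⟶ b) :
    P.map (liftM hP f) ≫ eqToHom (liftP hP f) = f :=
  (hP f).choose_spec.1.choose_spec

lemma lift_uniq (hP : IsDiscreteOpfib P) {e : E} {b : Fc} (f : P.obj e ⟶ b) {e' : E}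
    (g : e ⟶ e') (h : P.obj e' = b) (w : P.map g ≫ eqToHom h = f) :
    ∃ he : e' = liftO hP f, g ≫ eqToHom he = liftM hP f :=
  sigma_hom_eq ((hP f).choose_spec.2 ⟨e', g⟩ ⟨h, w⟩)

lemma lift_uniq2 (hP : IsDiscreteOpfib P) {e : E} {b : Fc} (f : P.obj e ⟶ b) {e' : E}
    (g₁ g₂ : e ⟶ e') (h : P.obj e' = b) (w₁ : P.map g₁ ≫ eqToHom h = f)
    (w₂ : P.map g₂ ≫ eqToHom h = f) : g₁ = g₂ := by
  obtain ⟨he₁, hm₁⟩ := lift_uniq hP f g₁ h w₁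
  obtain ⟨he₂, hm₂⟩ := lift_uniq hP f g₂ h w₂
  have h2 : g₁ ≫ eqToHom he₁ = g₂ ≫ eqToHom he₁ := hm₁.trans hm₂.symm
  have h3 := congrArg (fun t => t ≫ eqToHom he₁.symm) h2
  simpa using h3

/-- The comparison morphism used to define the diagonal. -/
def tf (hsq : U ⋙ S = T ⋙ P) {b : B} (j : CostructuredArrow U b) :
    P.obj (T.obj j.left) ⟶ S.obj b :=
  eqToHom (Functor.congr_obj hsq j.left).symm ≫ S.map j.hom

lemma tf_w (hsq : U ⋙ S = T ⋙ P) {b : B} {j j' : CostructuredArrow U b} (m : j ⟶ j') :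
    P.map (T.map m.left) ≫ tf hsq j' = tf hsq j := by
  have hw := CostructuredArrow.w m
  have hm := Functor.congr_hom hsq m.left
  simp only [Functor.comp_map] at hm
  dsimp [tf]
  rw [← hw, S.map_comp, hm]
  simp

variable (hP : IsDiscreteOpfib P) (hsq : U ⋙ S = T ⋙ P)

lemma Lobj_inv {b : B} {j j' : CostructuredArrow U b} (m : j ⟶ j') :
    liftO hP (tf hsq j') = liftO hP (tf hsq j) :=
  (lift_uniq hP (tf hsq j) (T.map m.left ≫ liftM hP (tf hsq j')) (liftP hP (tf hsq j'))
    (by rw [Functor.map_comp, Category.assoc, liftW]; exact tf_w hsq m)).choose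

lemma Lobj_const [U.Initial] {b : B} (j j' : CostructuredArrow U b) :
    liftO hP (tf hsq j) = liftO hP (tf hsq j') :=
  constant_of_preserves_morphisms (fun j => liftO hP (tf hsq j))
    (fun _ _ m => (Lobj_inv hP hsq m).symm) j j'

variable [U.Initial]

/-- The object part of the diagonal filler. -/
noncomputable def Dobj (b : B) : E :=
  liftO hP (tf hsq (Classical.arbitrary (CostructuredArrow U b)))

lemma hD (b : B) : P.obj (Dobj hP hsq b) = S.obj b := liftP hP _

/-- The morphism to be lifted when defining the diagonal on morphisms. -/
noncomputable def fD {b b' : B} (g : b ⟶ b') : P.obj (Dobj hP hsq b) ⟶ S.obj b' :=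
  eqToHom (hD hP hsq b) ≫ S.map g

lemma liftO_fD {b b' : B} (g : b ⟶ b') : liftO hP (fD hP hsq g) = Dobj hP hsq b' := by
  have hw : P.map (liftM hP (tf hsq (Classical.arbitrary (CostructuredArrow U b)))
        ≫ liftM hP (fD hP hsq g)) ≫ eqToHom (liftP hP (fD hP hsq g))
      = tf hsq (CostructuredArrow.mk
          ((Classical.arbitrary (CostructuredArrow U b)).hom ≫ g)) := by
    erw [Functor.map_comp, Category.assoc, liftW]
    show P.map (liftM hP _) ≫ eqToHom (hD hP hsq b) ≫ S.map g = _
    rw [← Category.assoc, liftW]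
    dsimp [tf]
    rw [S.map_comp]
    simp
  have key := lift_uniq hP
      (tf hsq (CostructuredArrow.mk ((Classical.arbitrary (CostructuredArrow U b)).hom ≫ g)))
      (liftM hP (tf hsq (Classical.arbitrary (CostructuredArrow U b))) ≫ liftM hP (fD hP hsq g))
      (liftP hP (fD hP hsq g)) hw
  exact key.choose.trans (Lobj_const hP hsq _ (Classical.arbitrary (CostructuredArrow U b')))

/-- The morphism part of the diagonal filler. -/
noncomputable def Dmap {b b' : B} (g : b ⟶ b') : Dobj hP hsq b ⟶ Dobj hP hsq b' :=
  liftM hP (fD hP hsq g) ≫ eqToHom (liftO_fD hP hsq g)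

lemma P_map_Dmap {b b' : B} (g : b ⟶ b') :
    P.map (Dmap hP hsq g) = eqToHom (hD hP hsq b) ≫ S.map g ≫ eqToHom (hD hP hsq b').symm := by
  have hw := liftW hP (fD hP hsq g)
  have h2 : P.map (liftM hP (fD hP hsq g))
      = fD hP hsq g ≫ eqToHom (liftP hP (fD hP hsq g)).symm :=
    (comp_eqToHom_iff _ _ _).1 hw
  dsimp [Dmap]
  rw [Functor.map_comp, eqToHom_map, h2]
  dsimp [fD]
  simp
  erw [eqToHom_trans]

/-- The diagonal filler functor. -/
noncomputable def Dfun : B ⥤ E where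
  obj := Dobj hP hsq
  map := Dmap hP hsq
  map_id b := by
    obtain ⟨he, hm⟩ := lift_uniq hP (fD hP hsq (𝟙 b)) (𝟙 (Dobj hP hsq b)) (hD hP hsq b)
      (by dsimp [fD]; simp)
    dsimp [Dmap]
    rw [← hm]
    simp
  map_comp {b b' b''} g g' := by
    have hw : P.map (Dmap hP hsq g ≫ liftM hP (fD hP hsq g'))
        ≫ eqToHom (liftP hP (fD hP hsq g')) = fD hP hsq (g ≫ g') := by
      rw [Functor.map_comp, Category.assoc, liftW, P_map_Dmap]
      dsimp [fD]
      simp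
    obtain ⟨he, hm⟩ := lift_uniq hP (fD hP hsq (g ≫ g'))
      (Dmap hP hsq g ≫ liftM hP (fD hP hsq g')) (liftP hP (fD hP hsq g')) hw
    show Dmap hP hsq (g ≫ g') = Dmap hP hsq g ≫ Dmap hP hsq g'
    dsimp only [Dmap]
    rw [← hm]
    simp [Dmap]

lemma Dfun_comp_P : Dfun hP hsq ⋙ P = S := by
  refine CategoryTheory.Functor.ext (fun b => hD hP hsq b) (fun b b' g => ?_)
  exact P_map_Dmap hP hsq g

lemma T_obj_eq (a : A) : T.obj a = Dobj hP hsq (U.obj a) := by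
  have hw : P.map (𝟙 (T.obj a)) ≫ eqToHom (Functor.congr_obj hsq a).symm
      = tf hsq (CostructuredArrow.mk (𝟙 (U.obj a))) := by
    dsimp [tf]; simp
  obtain ⟨he, hm⟩ := lift_uniq hP (tf hsq (CostructuredArrow.mk (𝟙 (U.obj a))))
    (𝟙 (T.obj a)) (Functor.congr_obj hsq a).symm hw
  exact he.trans (Lobj_const hP hsq _ _)

lemma U_comp_Dfun : U ⋙ Dfun hP hsq = T := by
  refine CategoryTheory.Functor.ext (fun a => (T_obj_eq hP hsq a).symm) (fun a a' k => ?_)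
  show Dmap hP hsq (U.map k) = _
  refine lift_uniq2 hP (fD hP hsq (U.map k)) _ _ (hD hP hsq (U.obj a')) ?_ ?_
  · rw [P_map_Dmap]
    dsimp [fD]
    simp
  · have hm := Functor.congr_hom hsq k
    simp only [Functor.comp_map] at hm
    have hm2 : P.map (T.map k) = eqToHom (Functor.congr_obj hsq a).symm
        ≫ S.map (U.map k) ≫ eqToHom (Functor.congr_obj hsq a') := by
      rw [hm]; simp
    erw [Functor.map_comp, Functor.map_comp, eqToHom_map, eqToHom_map, hm2]
    dsimp [fD]
    simp

lemma Dfun_unique (D' : B ⥤ E) (hUT : U ⋙ D' = T) (hPS : D' ⋙ P = S) :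
    D' = Dfun hP hsq := by
  have hob : ∀ b, D'.obj b = Dobj hP hsq b := by
    intro b
    set j := Classical.arbitrary (CostructuredArrow U b) with hj
    have hw : P.map (eqToHom (Functor.congr_obj hUT j.left).symm ≫ D'.map j.hom)
        ≫ eqToHom (Functor.congr_obj hPS b) = tf hsq j := by
      have hm := Functor.congr_hom hPS j.hom
      simp only [Functor.comp_map] at hm
      rw [Functor.map_comp, eqToHom_map, hm]
      dsimp [tf]
      simp
    obtain ⟨he, hm⟩ := lift_uniq hP (tf hsq j)
      (eqToHom (Functor.congr_obj hUT j.left).symm ≫ D'.map j.hom)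
      (Functor.congr_obj hPS b) hw
    exact he
  refine CategoryTheory.Functor.ext hob (fun b b' g => ?_)
  have : eqToHom (hob b).symm ≫ D'.map g ≫ eqToHom (hob b') = Dmap hP hsq g := by
    refine lift_uniq2 hP (fD hP hsq g) _ _ (hD hP hsq b') ?_ ?_
    · have hm := Functor.congr_hom hPS g
      simp only [Functor.comp_map] at hm
      rw [Functor.map_comp, Functor.map_comp, eqToHom_map, eqToHom_map, hm]
      dsimp [fD]
      simp
    · rw [P_map_Dmap]
      dsimp [fD]
      simp
  show D'.map g = eqToHom (hob b) ≫ Dmap hP hsq g ≫ eqToHom (hob b').symm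
  rw [← this]
  simp

end Ortho

end CFS

/-- In the slice category of `Cat` over `C`, the morphisms whose underlying functor is initial
and the morphisms whose underlying functor is a discrete opfibration form an orthogonal
factorization system: every morphism factors as an initial morphism followed by a discrete
opfibration, and every strictly commuting square from an initial morphism to a discrete
opfibration admits a unique diagonal filler. -/
theorem comprehensive_factorization_system_on_slice (C : Type u) [Category.{u} C] :
    (∀ {X Y : Over (Cat.of C)} (f : X ⟶ Y),
      ∃ (Z : Over (Cat.of C)) (i : X ⟶ Z) (pz : Z ⟶ Y),
        (i.left.toFunctor : ↑X.left ⥤ ↑Z.left).Initial ∧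
        IsDiscreteOpfib (pz.left.toFunctor : ↑Z.left ⥤ ↑Y.left) ∧ i ≫ pz = f) ∧
    (∀ {A B E F : Over (Cat.of C)} (u : A ⟶ B) (pf : E ⟶ F),
      (u.left.toFunctor : ↑A.left ⥤ ↑B.left).Initial →
      IsDiscreteOpfib (pf.left.toFunctor : ↑E.left ⥤ ↑F.left) →
      ∀ (t : A ⟶ E) (s : B ⟶ F), u ≫ s = t ≫ pf →
        ∃! d : B ⟶ E, u ≫ d = t ∧ d ≫ pf = s) := by
  constructor
  · intro X Y f
    let G : ↑X.left ⥤ ↑Y.left := f.left.toFunctor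
    let Z : Over (Cat.of C) := Over.mk (Y := Cat.of (CFS.Fact G)) (Cat.Hom.ofFunctor (CFS.factProj G ⋙ Y.hom.toFunctor))
    have hwi : (CFS.factIncl G ⋙ (CFS.factProj G ⋙ Y.hom.toFunctor) : ↑X.left ⥤ C) = X.hom.toFunctor :=
      congrArg Cat.Hom.toFunctor (Over.w f)
    refine ⟨Z, Over.homMk (Cat.Hom.ofFunctor (CFS.factIncl G)) (Cat.ext hwi),
      Over.homMk (Cat.Hom.ofFunctor (CFS.factProj G)) rfl,
      ?_, ?_, ?_⟩
    · exact CFS.factIncl_initial G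
    · exact CFS.factProj_opfib G
    · exact Over.OverMorphism.ext rfl
  · intro A B E F u pf hu hp t s hsq
    haveI := hu
    have hUS : (u.left.toFunctor ⋙ s.left.toFunctor : ↑A.left ⥤ ↑F.left) = t.left.toFunctor ⋙ pf.left.toFunctor := by
      have h := congrArg (fun m => m.left.toFunctor) hsq
      simpa using h
    have hD : CFS.Dfun hp hUS ⋙ pf.left.toFunctor = s.left.toFunctor := CFS.Dfun_comp_P hp hUS
    have hw : (Cat.Hom.ofFunctor (CFS.Dfun hp hUS) : B.left ⟶ E.left) ≫ E.hom = B.hom := by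
      rw [← Over.w pf, ← Over.w s, ← Category.assoc]
      congr 1
      exact Cat.ext hD
    refine ⟨Over.homMk (Cat.Hom.ofFunctor (CFS.Dfun hp hUS)) hw, ⟨?_, ?_⟩, ?_⟩
    · exact Over.OverMorphism.ext (Cat.ext (CFS.U_comp_Dfun hp hUS))
    · exact Over.OverMorphism.ext (Cat.ext hD)
    · rintro d' ⟨h1, h2⟩
      apply Over.OverMorphism.ext
      apply Cat.ext
      have e1 : (u.left.toFunctor ⋙ d'.left.toFunctor : ↑A.left ⥤ ↑E.left) = t.left.toFunctor := by
        have h := congrArg (fun m => m.left.toFunctor) h1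
        simpa using h
      have e2 : (d'.left.toFunctor ⋙ pf.left.toFunctor : ↑B.left ⥤ ↑F.left) = s.left.toFunctor := by
        have h := congrArg (fun m => m.left.toFunctor) h2
        simpa using h
      exact CFS.Dfun_unique hp hUS d'.left.toFunctor e1 e2
end

section
/- Let C be a category. In the category of functors C ⥤ Cat with natural transformations as morphisms, every morphism α : X ⟶ Y factors as α = β ≫ γ where every component of β is an initial functor and every component of γ is a discrete opfibration; moreover every natural transformation all of whose components are initial functors is strictly left orthogonal to every natural transformation all of whose components are discrete opfibrations (every strictly commuting square between them admits a unique diagonal natural transformation making both triangles commute strictly). -/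
open CategoryTheory

universe u

namespace CompFact

set_option linter.unusedSectionVars false

lemma sigmaHom_eq {E : Type*} [Category E] {e : E} {x y : Σ e', e ⟶ e'} (h : x = y) :
    x.2 ≫ eqToHom (congrArg Sigma.fst h) = y.2 := by subst h; simp

section Opfib

variable {E F : Type*} [Category E] [Category F] {p : E ⥤ F} (hp : IsDiscreteOpfib p)

noncomputable def lift {e : E} {b : F} (f : p.obj e ⟶ b) : Σ e', e ⟶ e' :=
  (hp f).exists.choose

lemma lift_obj {e : E} {b : F} (f : p.obj e ⟶ b) : p.obj (lift hp f).1 = b :=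
  (hp f).exists.choose_spec.choose

lemma lift_map {e : E} {b : F} (f : p.obj e ⟶ b) :
    p.map (lift hp f).2 ≫ eqToHom (lift_obj hp f) = f :=
  (hp f).exists.choose_spec.choose_spec

lemma lift_eq {e : E} {b : F} (f : p.obj e ⟶ b) {e' : E} (g : e ⟶ e')
    (h : p.obj e' = b) (hg : p.map g ≫ eqToHom h = f) :
    (⟨e', g⟩ : Σ e', e ⟶ e') = lift hp f :=
  ((hp f).unique ⟨h, hg⟩ ⟨lift_obj hp f, lift_map hp f⟩)

end Opfib

section Orth

variable {A B E F : Type*} [Category A] [Category B] [Category E] [Category F]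
variable (u : A ⥤ B) [u.Initial] {p : E ⥤ F} (hp : IsDiscreteOpfib p)
variable (t : A ⥤ E) (s : B ⥤ F) (hsq : u ⋙ s = t ⋙ p)

/-- The canonical morphism `p.obj (t.obj j.left) ⟶ s.obj b` attached to `j : u/b`. -/
def fj {b : B} (j : CostructuredArrow u b) : p.obj (t.obj j.left) ⟶ s.obj b :=
  eqToHom (Functor.congr_obj hsq j.left).symm ≫ s.map j.hom

noncomputable def e0 {b : B} (j : CostructuredArrow u b) : E :=
  (lift hp (fj u t s hsq j)).1

noncomputable def g0 {b : B} (j : CostructuredArrow u b) : t.obj j.left ⟶ e0 u hp t s hsq j :=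
  (lift hp (fj u t s hsq j)).2

lemma e0_obj {b : B} (j : CostructuredArrow u b) : p.obj (e0 u hp t s hsq j) = s.obj b :=
  lift_obj hp _

lemma g0_map {b : B} (j : CostructuredArrow u b) :
    p.map (g0 u hp t s hsq j) ≫ eqToHom (e0_obj u hp t s hsq j) = fj u t s hsq j :=
  lift_map hp _

lemma e0_const {b : B} (j₁ j₂ : CostructuredArrow u b) :
    e0 u hp t s hsq j₁ = e0 u hp t s hsq j₂ := by
  apply constant_of_preserves_morphisms (J := CostructuredArrow u b)
    (fun j => e0 u hp t s hsq j)
  intro j j' φ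
  have key : (⟨e0 u hp t s hsq j', t.map φ.left ≫ g0 u hp t s hsq j'⟩ : Σ e', t.obj j.left ⟶ e')
      = lift hp (fj u t s hsq j) := by
    apply lift_eq hp _ _ (e0_obj u hp t s hsq j')
    have hw : u.map φ.left ≫ j'.hom = j.hom := CostructuredArrow.w φ
    have hs : s.map (u.map φ.left)
        = eqToHom (Functor.congr_obj hsq j.left) ≫ p.map (t.map φ.left)
            ≫ eqToHom (Functor.congr_obj hsq j'.left).symm := by
      have := Functor.congr_hom hsq φ.left
      simpa using this
    rw [Functor.map_comp, Category.assoc, g0_map, fj, fj, ← hw, Functor.map_comp, hs]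
    simp
  exact congrArg Sigma.fst key.symm

noncomputable def objFn (b : B) : E :=
  e0 u hp t s hsq (Classical.arbitrary (CostructuredArrow u b))

lemma objFn_eq {b : B} (j : CostructuredArrow u b) :
    objFn u hp t s hsq b = e0 u hp t s hsq j :=
  e0_const u hp t s hsq _ _

lemma objFn_obj (b : B) : p.obj (objFn u hp t s hsq b) = s.obj b :=
  e0_obj u hp t s hsq _

noncomputable def fmap {b b' : B} (k : b ⟶ b') : p.obj (objFn u hp t s hsq b) ⟶ s.obj b' :=
  eqToHom (objFn_obj u hp t s hsq b) ≫ s.map k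

lemma lift_fmap_obj {b b' : B} (k : b ⟶ b') :
    (lift hp (fmap u hp t s hsq k)).1 = objFn u hp t s hsq b' := by
  set j := Classical.arbitrary (CostructuredArrow u b) with hj
  have h1 : objFn u hp t s hsq b = e0 u hp t s hsq j := objFn_eq u hp t s hsq j
  have key : (⟨(lift hp (fmap u hp t s hsq k)).1,
      g0 u hp t s hsq j ≫ eqToHom h1.symm ≫ (lift hp (fmap u hp t s hsq k)).2⟩
        : Σ e', t.obj (CostructuredArrow.mk (j.hom ≫ k)).left ⟶ e')
      = lift hp (fj u t s hsq (CostructuredArrow.mk (j.hom ≫ k))) := by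
    apply lift_eq hp _ _ (lift_obj hp _)
    rw [Functor.map_comp, Functor.map_comp, Category.assoc, Category.assoc, lift_map hp]
    rw [fmap, eqToHom_map, eqToHom_trans_assoc, ← Category.assoc, g0_map u hp t s hsq j]
    show (eqToHom (Functor.congr_obj hsq j.left).symm ≫ s.map j.hom) ≫ s.map k
      = eqToHom (Functor.congr_obj hsq j.left).symm ≫ s.map (j.hom ≫ k)
    rw [Functor.map_comp, Category.assoc]
  have h2 := congrArg Sigma.fst key
  exact h2.trans (objFn_eq u hp t s hsq (CostructuredArrow.mk (j.hom ≫ k))).symm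

noncomputable def mapFn {b b' : B} (k : b ⟶ b') :
    objFn u hp t s hsq b ⟶ objFn u hp t s hsq b' :=
  (lift hp (fmap u hp t s hsq k)).2 ≫ eqToHom (lift_fmap_obj u hp t s hsq k)

lemma mapFn_spec {b b' : B} (k : b ⟶ b') :
    p.map (mapFn u hp t s hsq k) ≫ eqToHom (objFn_obj u hp t s hsq b')
      = eqToHom (objFn_obj u hp t s hsq b) ≫ s.map k := by
  rw [mapFn, Functor.map_comp, eqToHom_map, Category.assoc, eqToHom_trans]
  exact lift_map hp _

lemma mapFn_unique {b b' : B} (k : b ⟶ b') {e' : E} (g : objFn u hp t s hsq b ⟶ e')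
    (h : p.obj e' = s.obj b')
    (hg : p.map g ≫ eqToHom h = eqToHom (objFn_obj u hp t s hsq b) ≫ s.map k) :
    (⟨e', g⟩ : Σ x, objFn u hp t s hsq b ⟶ x) = ⟨objFn u hp t s hsq b', mapFn u hp t s hsq k⟩ := by
  have h1 : (⟨e', g⟩ : Σ x, objFn u hp t s hsq b ⟶ x) = lift hp (fmap u hp t s hsq k) :=
    lift_eq hp _ _ h hg
  have h2 : (⟨objFn u hp t s hsq b', mapFn u hp t s hsq k⟩
      : Σ x, objFn u hp t s hsq b ⟶ x) = lift hp (fmap u hp t s hsq k) := by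
    apply lift_eq hp _ _ (objFn_obj u hp t s hsq b')
    exact mapFn_spec u hp t s hsq k
  rw [h1, h2]

noncomputable def dFun : B ⥤ E where
  obj := objFn u hp t s hsq
  map := mapFn u hp t s hsq
  map_id b := by
    have key := mapFn_unique u hp t s hsq (𝟙 b) (𝟙 (objFn u hp t s hsq b))
      (objFn_obj u hp t s hsq b) (by simp)
    have := sigmaHom_eq key.symm
    simpa using this
  map_comp {b b' b''} k k' := by
    have key := mapFn_unique u hp t s hsq (k ≫ k')
      (mapFn u hp t s hsq k ≫ mapFn u hp t s hsq k') (objFn_obj u hp t s hsq b'')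
      (by rw [Functor.map_comp, Category.assoc, mapFn_spec, ← Category.assoc, mapFn_spec]
          simp)
    have := sigmaHom_eq key.symm
    simpa using this

lemma dFun_comm₁ : u ⋙ dFun u hp t s hsq = t := by
  have hobj : ∀ a : A, (u ⋙ dFun u hp t s hsq).obj a = t.obj a := by
    intro a
    have key : (⟨t.obj a, 𝟙 (t.obj a)⟩ : Σ e', t.obj a ⟶ e')
        = lift hp (fj u t s hsq (CostructuredArrow.mk (𝟙 (u.obj a)))) := by
      apply lift_eq hp _ _ (Functor.congr_obj hsq a).symm
      rw [fj]
      simp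
    show objFn u hp t s hsq (u.obj a) = t.obj a
    rw [objFn_eq u hp t s hsq (CostructuredArrow.mk (𝟙 (u.obj a))), e0, ← key]
  refine CategoryTheory.Functor.ext hobj fun a a' φ => ?_
  have hs : s.map (u.map φ)
      = eqToHom (Functor.congr_obj hsq a) ≫ p.map (t.map φ)
          ≫ eqToHom (Functor.congr_obj hsq a').symm := by
    have := Functor.congr_hom hsq φ
    simpa using this
  have key := mapFn_unique u hp t s hsq (u.map φ)
    (eqToHom (hobj a) ≫ t.map φ ≫ eqToHom (hobj a').symm)
    (objFn_obj u hp t s hsq (u.obj a'))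
    (by simp only [Functor.map_comp, hs]; erw [eqToHom_map, eqToHom_map]; simp; erw [eqToHom_trans])
  have h2 := sigmaHom_eq key
  simp only at h2
  show mapFn u hp t s hsq (u.map φ) = _
  rw [← h2]
  simp
  rfl

lemma dFun_comm₂ : dFun u hp t s hsq ⋙ p = s := by
  refine CategoryTheory.Functor.ext (objFn_obj u hp t s hsq) fun b b' k => ?_
  have := mapFn_spec u hp t s hsq k
  show p.map (mapFn u hp t s hsq k) = _
  rw [← Category.assoc]
  erw [← this]
  erw [Category.assoc, eqToHom_trans, eqToHom_refl, Category.comp_id]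

lemma dFun_uniq (d : B ⥤ E) (h1 : u ⋙ d = t) (h2 : d ⋙ p = s) : d = dFun u hp t s hsq := by
  have hobj : ∀ b : B, d.obj b = objFn u hp t s hsq b := by
    intro b
    set j := Classical.arbitrary (CostructuredArrow u b) with hj
    have key : (⟨d.obj b, eqToHom (Functor.congr_obj h1 j.left).symm ≫ d.map j.hom⟩
        : Σ e', t.obj j.left ⟶ e') = lift hp (fj u t s hsq j) := by
      apply lift_eq hp _ _ (Functor.congr_obj h2 b)
      have hd : p.map (d.map j.hom)
          = eqToHom (Functor.congr_obj h2 (u.obj j.left)) ≫ s.map j.hom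
              ≫ eqToHom (Functor.congr_obj h2 b).symm := by
        have := Functor.congr_hom h2 j.hom
        simpa using this
      rw [Functor.map_comp, eqToHom_map, hd, fj]
      simp
    have h3 := congrArg Sigma.fst key
    exact h3.trans (objFn_eq u hp t s hsq j).symm
  refine CategoryTheory.Functor.ext hobj fun b b' k => ?_
  have hd : p.map (d.map k)
      = eqToHom (Functor.congr_obj h2 b) ≫ s.map k
          ≫ eqToHom (Functor.congr_obj h2 b').symm := by
    have := Functor.congr_hom h2 k
    simpa using this
  have key := mapFn_unique u hp t s hsq k
    (eqToHom (hobj b).symm ≫ d.map k) (Functor.congr_obj h2 b')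
    (by rw [Functor.map_comp, eqToHom_map, hd]; simp)
  have h3 := sigmaHom_eq key
  simp only at h3
  show d.map k = eqToHom (hobj b) ≫ mapFn u hp t s hsq k ≫ eqToHom (hobj b').symm
  rw [← h3]
  simp

include hp hsq in
theorem cat_orth : ∃! d : B ⥤ E, u ⋙ d = t ∧ d ⋙ p = s :=
  ⟨dFun u hp t s hsq, ⟨dFun_comm₁ u hp t s hsq, dFun_comm₂ u hp t s hsq⟩,
    fun d ⟨h1, h2⟩ => dFun_uniq u hp t s hsq d h1 h2⟩

end Orth


variable {A B : Type u} [Category.{u} A] [Category.{u} B]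

/-- Object-part equality helper for costructured arrows. -/
lemma csa_mk_hom {F : A ⥤ B} {b : B} (w : CostructuredArrow F b) :
    CostructuredArrow.mk w.hom = w := by
  obtain ⟨l, ⟨⟨⟩⟩, h⟩ := w
  rfl

/-- The π₀-of-comma-categories functor classifying the opfibration part. -/
def Lfun (F : A ⥤ B) : B ⥤ Type u where
  obj b := ConnectedComponents (CostructuredArrow F b)
  map {b b'} k := TypeCat.ofHom (CostructuredArrow.map k).mapConnectedComponents
  map_id b := by
    ext x
    induction x using Quotient.inductionOn' with
    | h w =>
      show Quotient.mk _ ((CostructuredArrow.map (𝟙 b)).obj w) = Quotient.mk _ w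
      exact congrArg _ CostructuredArrow.map_id
  map_comp {b b' b''} k k' := by
    ext x
    induction x using Quotient.inductionOn' with
    | h w =>
      show Quotient.mk _ ((CostructuredArrow.map (k ≫ k')).obj w)
        = Quotient.mk _ ((CostructuredArrow.map k').obj ((CostructuredArrow.map k).obj w))
      exact congrArg _ CostructuredArrow.map_comp

/-- The discrete-opfibration leg. -/
def projZ (F : A ⥤ B) : (Lfun F).Elements ⥤ B := CategoryOfElements.π _

lemma lfun_map_mk (F : A ⥤ B) {b b' : B} (k : b ⟶ b') (w : CostructuredArrow F b) :
    (Lfun F).map k (Quotient.mk _ w) = Quotient.mk _ ((CostructuredArrow.map k).obj w) := rfl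

/-- The initial-functor leg. -/
def toZ (F : A ⥤ B) : A ⥤ (Lfun F).Elements where
  obj a := ⟨F.obj a, Quotient.mk _ (CostructuredArrow.mk (𝟙 (F.obj a)))⟩
  map {a a'} φ := ⟨F.map φ, by
    rw [lfun_map_mk]
    apply Quotient.sound
    exact Zigzag.of_hom (CostructuredArrow.homMk φ (by simp))⟩
  map_id a := by apply Subtype.ext; simp; rfl
  map_comp φ ψ := by apply Subtype.ext; simp; rfl






variable {A B : Type u} [Category.{u} A] [Category.{u} B]

lemma toZ_projZ (F : A ⥤ B) : toZ F ⋙ projZ F = F := rfl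

lemma projZ_opfib (F : A ⥤ B) : IsDiscreteOpfib (projZ F) := by
  rintro ⟨b, x⟩ b'' f
  refine ⟨⟨⟨b'', (Lfun F).map f x⟩, ⟨f, rfl⟩⟩, ⟨rfl, by simp [projZ, CategoryOfElements.π]; erw [eqToHom_refl, Category.comp_id]⟩, ?_⟩
  rintro ⟨⟨b₂, x₂⟩, g⟩ ⟨h, hg⟩
  dsimp [projZ, CategoryOfElements.π] at h hg
  subst h
  simp only [eqToHom_refl, Category.comp_id] at hg
  have hx : x₂ = (Lfun F).map f x := by rw [← hg]; exact g.2.symm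
  subst hx
  exact congrArg _ (Subtype.ext hg)

section Up

variable (F : A ⥤ B) {b : B} {x : (Lfun F).obj b}

def upObj (w : CostructuredArrow F b) (hw : Quotient.mk _ w = x) :
    CostructuredArrow (toZ F) (Functor.elementsMk (Lfun F) b x) :=
  CostructuredArrow.mk (Y := w.left)
    (⟨w.hom, by
      show (Lfun F).map w.hom (Quotient.mk _ (CostructuredArrow.mk (𝟙 (F.obj w.left)))) = x
      rw [lfun_map_mk, CostructuredArrow.map_mk, Category.id_comp, csa_mk_hom]
      exact hw⟩ : (toZ F).obj w.left ⟶ Functor.elementsMk (Lfun F) b x)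

lemma mem_of (j : CostructuredArrow (toZ F) (Functor.elementsMk (Lfun F) b x)) :
    Quotient.mk _ (CostructuredArrow.mk j.hom.val) = x := by
  have hpr := j.hom.2
  dsimp [toZ] at hpr
  erw [lfun_map_mk, CostructuredArrow.map_mk, Category.id_comp] at hpr
  exact hpr

lemma up_down (j : CostructuredArrow (toZ F) (Functor.elementsMk (Lfun F) b x)) :
    upObj F (CostructuredArrow.mk j.hom.val) (mem_of F j) = j :=
  csa_mk_hom j

lemma zag_up {w w' : CostructuredArrow F b} (hw : Quotient.mk _ w = x)
    (hw' : Quotient.mk _ w' = x) (hz : Zag w w') :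
    Zag (upObj F w hw) (upObj F w' hw') := by
  rcases hz with ⟨⟨ψ⟩⟩ | ⟨⟨ψ⟩⟩
  · exact Or.inl ⟨CostructuredArrow.homMk ψ.left (Subtype.ext (CostructuredArrow.w ψ))⟩
  · exact Or.inr ⟨CostructuredArrow.homMk ψ.left (Subtype.ext (CostructuredArrow.w ψ))⟩

lemma zigzag_up {w w' : CostructuredArrow F b} (hz : Zigzag w w') :
    ∀ (hw : Quotient.mk _ w = x) (hw' : Quotient.mk _ w' = x),
      Zigzag (upObj F w hw) (upObj F w' hw') := by
  induction hz with
  | refl => intro hw hw'; exact Zigzag.refl _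
  | tail hstep hzag ih =>
    intro hw hw'
    have hmid := (Quotient.sound (Zigzag.of_zag hzag)).trans hw'
    exact (ih hw hmid).trans (Zigzag.of_zag (zag_up F hmid hw' hzag))

end Up

lemma toZ_initial (F : A ⥤ B) : (toZ F).Initial := by
  refine ⟨fun z => ?_⟩
  obtain ⟨b, x⟩ := z
  obtain ⟨w, hw⟩ := Quotient.exists_rep x
  haveI : Nonempty (CostructuredArrow (toZ F) (Functor.elementsMk (Lfun F) b x)) :=
    ⟨upObj F w hw⟩
  apply zigzag_isConnected (J := CostructuredArrow (toZ F) (Functor.elementsMk (Lfun F) b x))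
  intro j₁ j₂
  have h₁ := mem_of F j₁
  have h₂ := mem_of F j₂
  have hz : Zigzag (CostructuredArrow.mk j₁.hom.val) (CostructuredArrow.mk j₂.hom.val) :=
    Quotient.exact (h₁.trans h₂.symm)
  have := zigzag_up F hz h₁ h₂
  rwa [up_down, up_down] at this


section Main

variable {C : Type u} [Category.{u} C] {X Y : C ⥤ Cat.{u, u}} (α : X ⟶ Y)

lemma nat_sq {c c' : C} (f : c ⟶ c') :
    toZ (α.app c).toFunctor ⋙ (projZ (α.app c).toFunctor ⋙ (Y.map f).toFunctor)
      = ((X.map f).toFunctor ⋙ toZ (α.app c').toFunctor) ⋙ projZ (α.app c').toFunctor := by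
  rw [← Functor.assoc, toZ_projZ, Functor.assoc, toZ_projZ]
  exact congrArg Cat.Hom.toFunctor (α.naturality f).symm

noncomputable def Zfun : C ⥤ Cat.{u, u} where
  obj c := Cat.of (Lfun (α.app c).toFunctor).Elements
  map {c c'} f :=
    letI := toZ_initial (α.app c).toFunctor
    (dFun (toZ (α.app c).toFunctor) (projZ_opfib (α.app c').toFunctor)
      ((X.map f).toFunctor ⋙ toZ (α.app c').toFunctor)
      (projZ (α.app c).toFunctor ⋙ (Y.map f).toFunctor) (nat_sq α f)).toCatHom
  map_id c := by
    letI := toZ_initial (α.app c).toFunctor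
    apply Cat.ext
    refine (dFun_uniq (toZ (α.app c).toFunctor) (projZ_opfib (α.app c).toFunctor) _ _
      (nat_sq α (𝟙 c)) (𝟭 _) ?_ ?_).symm
    · show toZ (α.app c).toFunctor ⋙ 𝟭 _ = (X.map (𝟙 c)).toFunctor ⋙ toZ (α.app c).toFunctor
      rw [Functor.comp_id, CategoryTheory.Functor.map_id]
      rfl
    · show 𝟭 _ ⋙ projZ (α.app c).toFunctor = projZ (α.app c).toFunctor ⋙ (Y.map (𝟙 c)).toFunctor
      rw [Functor.id_comp, CategoryTheory.Functor.map_id]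
      rfl
  map_comp {c c' c''} f g := by
    letI := toZ_initial (α.app c).toFunctor
    letI := toZ_initial (α.app c').toFunctor
    apply Cat.ext
    refine (dFun_uniq (toZ (α.app c).toFunctor) (projZ_opfib (α.app c'').toFunctor) _ _
      (nat_sq α (f ≫ g))
      (dFun (toZ (α.app c).toFunctor) (projZ_opfib (α.app c').toFunctor)
          ((X.map f).toFunctor ⋙ toZ (α.app c').toFunctor)
          (projZ (α.app c).toFunctor ⋙ (Y.map f).toFunctor) (nat_sq α f) ⋙
        dFun (toZ (α.app c').toFunctor) (projZ_opfib (α.app c'').toFunctor)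
          ((X.map g).toFunctor ⋙ toZ (α.app c'').toFunctor)
          (projZ (α.app c').toFunctor ⋙ (Y.map g).toFunctor) (nat_sq α g)) ?_ ?_).symm
    · rw [← Functor.assoc, dFun_comm₁, Functor.assoc, dFun_comm₁, ← Functor.assoc]
      have : (X.map f).toFunctor ⋙ (X.map g).toFunctor = (X.map (f ≫ g)).toFunctor := by
        rw [X.map_comp]; rfl
      rw [this]
    · rw [Functor.assoc, dFun_comm₂, ← Functor.assoc, dFun_comm₂, Functor.assoc]
      have : (Y.map f).toFunctor ⋙ (Y.map g).toFunctor = (Y.map (f ≫ g)).toFunctor := by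
        rw [Y.map_comp]; rfl
      rw [this]

noncomputable def betaNat : X ⟶ Zfun α where
  app c := (toZ (α.app c).toFunctor).toCatHom
  naturality {c c'} f := by
    letI := toZ_initial (α.app c).toFunctor
    apply Cat.ext
    exact (dFun_comm₁ (toZ (α.app c).toFunctor) (projZ_opfib (α.app c').toFunctor)
      ((X.map f).toFunctor ⋙ toZ (α.app c').toFunctor)
      (projZ (α.app c).toFunctor ⋙ (Y.map f).toFunctor) (nat_sq α f)).symm

noncomputable def gammaNat : Zfun α ⟶ Y where
  app c := (projZ (α.app c).toFunctor).toCatHom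
  naturality {c c'} f := by
    letI := toZ_initial (α.app c).toFunctor
    apply Cat.ext
    exact dFun_comm₂ (toZ (α.app c).toFunctor) (projZ_opfib (α.app c').toFunctor)
      ((X.map f).toFunctor ⋙ toZ (α.app c').toFunctor)
      (projZ (α.app c).toFunctor ⋙ (Y.map f).toFunctor) (nat_sq α f)

end Main

end CompFact

open CompFact

/-- In the category of functors `C ⥤ Cat`, every natural transformation factors as one with
componentwise initial functors followed by one with componentwise discrete opfibrations, and
componentwise-initial transformations are strictly left orthogonal to componentwise discrete
opfibrations. -/
theorem componentwise_comprehensive_factorization (C : Type u) [Category.{u} C] :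
    (∀ (X Y : C ⥤ Cat.{u, u}) (α : X ⟶ Y),
      ∃ (Z : C ⥤ Cat.{u, u}) (β : X ⟶ Z) (γ : Z ⟶ Y),
        (∀ c : C, ((β.app c).toFunctor : ↑(X.obj c) ⥤ ↑(Z.obj c)).Initial) ∧
        (∀ c : C, IsDiscreteOpfib ((γ.app c).toFunctor : ↑(Z.obj c) ⥤ ↑(Y.obj c))) ∧
        β ≫ γ = α) ∧
    (∀ (A B E F : C ⥤ Cat.{u, u}) (u : A ⟶ B) (p : E ⟶ F),
      (∀ c : C, ((u.app c).toFunctor : ↑(A.obj c) ⥤ ↑(B.obj c)).Initial) →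
      (∀ c : C, IsDiscreteOpfib ((p.app c).toFunctor : ↑(E.obj c) ⥤ ↑(F.obj c))) →
      ∀ (t : A ⟶ E) (s : B ⟶ F), u ≫ s = t ≫ p →
        ∃! d : B ⟶ E, u ≫ d = t ∧ d ≫ p = s) := by
  constructor
  · intro X Y α
    refine ⟨Zfun α, betaNat α, gammaNat α, fun c => toZ_initial (α.app c).toFunctor,
      fun c => projZ_opfib (α.app c).toFunctor, ?_⟩
    apply NatTrans.ext
    funext c
    exact Cat.ext (toZ_projZ (α.app c).toFunctor)
  · intro A B E F uu pp hu hp tt ss hsq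
    have sqc : ∀ c : C, (uu.app c).toFunctor ⋙ (ss.app c).toFunctor
        = (tt.app c).toFunctor ⋙ (pp.app c).toFunctor := fun c =>
      congrArg Cat.Hom.toFunctor (congr_fun (congr_arg NatTrans.app hsq) c)
    let D : ∀ c : C, ↑(B.obj c) ⥤ ↑(E.obj c) := fun c =>
      letI := hu c
      dFun (uu.app c).toFunctor (hp c) (tt.app c).toFunctor (ss.app c).toFunctor (sqc c)
    have hD1 : ∀ c : C, (uu.app c).toFunctor ⋙ D c = (tt.app c).toFunctor := fun c =>
      letI := hu c
      dFun_comm₁ (uu.app c).toFunctor (hp c) (tt.app c).toFunctor (ss.app c).toFunctor (sqc c)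
    have hD2 : ∀ c : C, D c ⋙ (pp.app c).toFunctor = (ss.app c).toFunctor := fun c =>
      letI := hu c
      dFun_comm₂ (uu.app c).toFunctor (hp c) (tt.app c).toFunctor (ss.app c).toFunctor (sqc c)
    have hDu : ∀ (c : C) (d' : ↑(B.obj c) ⥤ ↑(E.obj c)), (uu.app c).toFunctor ⋙ d' = (tt.app c).toFunctor →
        d' ⋙ (pp.app c).toFunctor = (ss.app c).toFunctor → d' = D c := fun c d' h1 h2 =>
      letI := hu c
      dFun_uniq (uu.app c).toFunctor (hp c) (tt.app c).toFunctor (ss.app c).toFunctor (sqc c) d' h1 h2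
    have hnat : ∀ {c c' : C} (f : c ⟶ c'), (B.map f).toFunctor ⋙ D c' = D c ⋙ (E.map f).toFunctor := by
      intro c c' f
      letI := hu c
      have sq2 : (uu.app c).toFunctor ⋙ ((B.map f).toFunctor ⋙ (ss.app c').toFunctor)
          = ((tt.app c).toFunctor ⋙ (E.map f).toFunctor) ⋙ (pp.app c').toFunctor := by
        have h1 : (uu.app c).toFunctor ⋙ (B.map f).toFunctor = (A.map f).toFunctor ⋙ (uu.app c').toFunctor :=
          congrArg Cat.Hom.toFunctor (uu.naturality f).symm
        have h3 : (tt.app c).toFunctor ⋙ (E.map f).toFunctor = (A.map f).toFunctor ⋙ (tt.app c').toFunctor :=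
          congrArg Cat.Hom.toFunctor (tt.naturality f).symm
        rw [← Functor.assoc, h1, Functor.assoc, sqc c', h3, Functor.assoc]
      have e1 : D c ⋙ (E.map f).toFunctor
          = dFun (uu.app c).toFunctor (hp c') ((tt.app c).toFunctor ⋙ (E.map f).toFunctor)
              ((B.map f).toFunctor ⋙ (ss.app c').toFunctor) sq2 := by
        apply dFun_uniq
        · rw [← Functor.assoc, hD1]
        · rw [Functor.assoc]
          have h2 : (E.map f).toFunctor ⋙ (pp.app c').toFunctor = (pp.app c).toFunctor ⋙ (F.map f).toFunctor :=
            congrArg Cat.Hom.toFunctor (pp.naturality f)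
          rw [h2, ← Functor.assoc, hD2]
          exact congrArg Cat.Hom.toFunctor (ss.naturality f).symm
      have e2 : (B.map f).toFunctor ⋙ D c'
          = dFun (uu.app c).toFunctor (hp c') ((tt.app c).toFunctor ⋙ (E.map f).toFunctor)
              ((B.map f).toFunctor ⋙ (ss.app c').toFunctor) sq2 := by
        apply dFun_uniq
        · rw [← Functor.assoc]
          have h1 : (uu.app c).toFunctor ⋙ (B.map f).toFunctor = (A.map f).toFunctor ⋙ (uu.app c').toFunctor :=
            congrArg Cat.Hom.toFunctor (uu.naturality f).symm
          rw [h1, Functor.assoc, hD1]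
          exact congrArg Cat.Hom.toFunctor (tt.naturality f)
        · rw [Functor.assoc, hD2]
      exact e2.trans e1.symm
    refine ⟨⟨fun c => (D c).toCatHom, fun {c c'} f => Cat.ext (hnat f)⟩, ⟨?_, ?_⟩, ?_⟩
    · apply NatTrans.ext; funext c; exact Cat.ext (hD1 c)
    · apply NatTrans.ext; funext c; exact Cat.ext (hD2 c)
    · rintro d' ⟨h1', h2'⟩
      apply NatTrans.ext
      funext c
      exact Cat.ext (hDu c (d'.app c).toFunctor
        (congrArg Cat.Hom.toFunctor (congr_fun (congr_arg NatTrans.app h1') c))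
        (congrArg Cat.Hom.toFunctor (congr_fun (congr_arg NatTrans.app h2') c)))
end

section
/- Let K be a profunctor from C to D, L a profunctor from C' to D', and (F, H, ψ) a strict morphism from K to L, i.e. functors F : C ⥤ C', H : D ⥤ D' and functions ψ : K(c,d) → L(F.obj c, H.obj d) natural in c and d. Then the restriction functor from the category of instances of L to the category of instances of K, sending (X, Y, β) to (F ⋙ X, H ⋙ Y, (x,k) ↦ β x (ψ k)) and acting on morphisms by whiskering, admits both a left adjoint and a right adjoint. -/
open CategoryTheory Opposite

universe u

variable {C D C' D' : Type u} [Category.{u} C] [Category.{u} D]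
  [Category.{u} C'] [Category.{u} D']

/-- Restriction of instances along a strict morphism `(F, H, ψ)` of profunctors from `K` to
`L`, sending `(X, Y, β)` to `(F ⋙ X, H ⋙ Y, (x, k) ↦ β x (ψ k))` and acting on morphisms by
whiskering. -/
def restrictProfInstance (K : Cᵒᵖ × D ⥤ Type u) (L : C'ᵒᵖ × D' ⥤ Type u)
    (F : C ⥤ C') (H : D ⥤ D')
    (ψ : ∀ (c : C) (d : D), K.obj (op c, d) → L.obj (op (F.obj c), H.obj d))
    (hψ : ∀ {c₂ c₁ : C} {d₁ d₂ : D} (f : c₂ ⟶ c₁) (g : d₁ ⟶ d₂) (k : K.obj (op c₁, d₁)),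
      ψ c₂ d₂ (K.map (f.op, g) k) = L.map ((F.map f).op, H.map g) (ψ c₁ d₁ k)) :
    ProfInstance L ⥤ ProfInstance K where
  obj I :=
    { X := F ⋙ I.X
      Y := H ⋙ I.Y
      act := fun {c d} x k => I.act x (ψ c d k)
      act_map := fun {c d d'} g x k => by
        have h1 := I.act_map (H.map g) x (ψ c d k)
        have h2 := hψ (𝟙 c) g k
        rw [F.map_id] at h2
        show I.Y.map (H.map g) (I.act x (ψ c d k)) = I.act x (ψ c d' (K.map (𝟙 (op c), g) k))
        rw [h1]
        congr 1
        rw [show ((𝟙 c : c ⟶ c).op, g) = ((𝟙 (op c) : op c ⟶ op c), g) from rfl] at h2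
        rw [h2]
        rfl
      map_act := fun {c c' d} f x k => by
        have h1 := I.map_act (F.map f) x (ψ c' d k)
        have h2 := hψ f (𝟙 d) k
        rw [H.map_id] at h2
        show I.act (I.X.map (F.map f) x) (ψ c' d k) = I.act x (ψ c d (K.map (f.op, 𝟙 d) k))
        rw [h1, h2] }
  map {I J} f := ⟨(Functor.whiskerLeft F f.1.1, Functor.whiskerLeft H f.1.2),
    fun {c d} x k => f.2 x (ψ c d k)⟩
  map_id I := rfl
  map_comp f g := rfl

namespace CollageAux

variable (K : Cᵒᵖ × D ⥤ Type u)

abbrev Kmap {c c' : C} {d d' : D} (f : c' ⟶ c) (g : d ⟶ d') :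
    K.obj (op c, d) → K.obj (op c', d') :=
  K.map ((f.op, g) : ((op c, d) : Cᵒᵖ × D) ⟶ (op c', d'))

lemma Kmap_Kmap {c c' c'' : C} {d d' d'' : D} (f : c' ⟶ c) (g : d ⟶ d')
    (f' : c'' ⟶ c') (g' : d' ⟶ d'') (k : K.obj (op c, d)) :
    Kmap K f' g' (Kmap K f g k) = Kmap K (f' ≫ f) (g ≫ g') k :=
  (FunctorToTypes.map_comp_apply K ((f.op, g) : ((op c, d) : Cᵒᵖ × D) ⟶ (op c', d'))
    ((f'.op, g') : ((op c', d') : Cᵒᵖ × D) ⟶ (op c'', d'')) k).symm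

lemma Kmap_id {c : C} {d : D} (k : K.obj (op c, d)) : Kmap K (𝟙 c) (𝟙 d) k = k :=
  FunctorToTypes.map_id_apply K k

inductive Coll (_K : Cᵒᵖ × D ⥤ Type u) : Type u
  | inl : C → Coll _K
  | inr : D → Coll _K

def CollHom : Coll K → Coll K → Type u
  | .inl c, .inl c' => c ⟶ c'
  | .inl c, .inr d => K.obj (op c, d)
  | .inr _, .inl _ => PEmpty
  | .inr d, .inr d' => d ⟶ d'

def CollId : ∀ a : Coll K, CollHom K a a
  | .inl c => 𝟙 c
  | .inr d => 𝟙 d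

def CollComp : ∀ {a b c : Coll K}, CollHom K a b → CollHom K b c → CollHom K a c
  | .inl a, .inl b, .inl c, f, g => ((f : a ⟶ b) ≫ (g : b ⟶ c) : a ⟶ c)
  | .inl a, .inl b, .inr d, f, k => Kmap K (f : a ⟶ b) (𝟙 d) (k : K.obj (op b, d))
  | .inl a, .inr d, .inr d', k, g => Kmap K (𝟙 a) (g : d ⟶ d') (k : K.obj (op a, d))
  | .inr d, .inr d', .inr _, f, g => ((f : d ⟶ d') ≫ g)
  | .inr _, .inl _, _, f, _ => (f : PEmpty).elim
  | .inl _, .inr _, .inl _, _, g => (g : PEmpty).elim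
  | .inr _, .inr _, .inl _, _, g => (g : PEmpty).elim

instance : Category.{u} (Coll K) where
  Hom := CollHom K
  id := CollId K
  comp := CollComp K
  id_comp {a b} f := by
    rcases a with c | d <;> rcases b with c' | d' <;> try exact (f : PEmpty).elim
    · exact Category.id_comp (f : c ⟶ c')
    · exact Kmap_id K (f : K.obj (op c, d'))
    · exact Category.id_comp (f : d ⟶ d')
  comp_id {a b} f := by
    rcases a with c | d <;> rcases b with c' | d' <;> try exact (f : PEmpty).elim
    · exact Category.comp_id (f : c ⟶ c')
    · exact Kmap_id K (f : K.obj (op c, d'))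
    · exact Category.comp_id (f : d ⟶ d')
  assoc {a b c d} f g h := by
    rcases a with a | a <;> rcases b with b | b <;> rcases c with c | c <;>
      rcases d with d | d <;> first
      | exact (f : PEmpty).elim | exact (g : PEmpty).elim | exact (h : PEmpty).elim
      | skip
    · exact Category.assoc (f : a ⟶ b) g h
    · show Kmap K ((f : a ⟶ b) ≫ (g : b ⟶ c)) (𝟙 d) (h : K.obj (op c, d)) =
        Kmap K (f : a ⟶ b) (𝟙 d) (Kmap K (g : b ⟶ c) (𝟙 d) h)
      erw [Kmap_Kmap, Category.comp_id]
    · show Kmap K (𝟙 a) (h : c ⟶ d) (Kmap K (f : a ⟶ b) (𝟙 c) (g : K.obj (op b, c))) =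
        Kmap K (f : a ⟶ b) (𝟙 d) (Kmap K (𝟙 b) (h : c ⟶ d) g)
      erw [Kmap_Kmap, Kmap_Kmap, Category.comp_id, Category.comp_id, Category.id_comp,
        Category.id_comp]
    · show Kmap K (𝟙 a) (h : c ⟶ d) (Kmap K (𝟙 a) (g : b ⟶ c) (f : K.obj (op a, b))) =
        Kmap K (𝟙 a) ((g : b ⟶ c) ≫ (h : c ⟶ d)) f
      erw [Kmap_Kmap, Category.comp_id]
    · exact Category.assoc (f : a ⟶ b) g h

/-- Homs of the collage, viewed with their categorical types. -/
def collL {c c' : C} (f : c ⟶ c') : (Coll.inl c : Coll K) ⟶ Coll.inl c' := f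

def collR {d d' : D} (g : d ⟶ d') : (Coll.inr d : Coll K) ⟶ Coll.inr d' := g

def collUp {c : C} {d : D} (k : K.obj (op c, d)) : (Coll.inl c : Coll K) ⟶ Coll.inr d := k

/-- The inclusion of `C` into the collage. -/
def collInl : C ⥤ Coll K where
  obj c := Coll.inl c
  map f := collL K f
  map_id _ := rfl
  map_comp _ _ := rfl

/-- The inclusion of `D` into the collage. -/
def collInr : D ⥤ Coll K where
  obj d := Coll.inr d
  map g := collR K g
  map_id _ := rfl
  map_comp _ _ := rfl

/-- From a profunctor instance to a copresheaf on the collage. -/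
def toCollObj (I : ProfInstance K) : Coll K ⥤ Type u where
  obj a := match a with
    | .inl c => I.X.obj c
    | .inr d => I.Y.obj d
  map {a b} f := match a, b, f with
    | .inl c, .inl c', f => I.X.map (f : c ⟶ c')
    | .inl c, .inr d, k => TypeCat.ofHom (fun x => I.act x (k : K.obj (op c, d)))
    | .inr _, .inl _, f => (f : PEmpty).elim
    | .inr d, .inr d', f => I.Y.map (f : d ⟶ d')
  map_id a := by
    cases a
    · exact I.X.map_id _
    · exact I.Y.map_id _
  map_comp {a b c} f g := by
    rcases a with a | a <;> rcases b with b | b <;> rcases c with c | c <;> first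
      | exact (f : PEmpty).elim | exact (g : PEmpty).elim | skip
    · exact I.X.map_comp (f : a ⟶ b) (g : b ⟶ c)
    · ext x
      exact (I.map_act (f : a ⟶ b) x (g : K.obj (op b, c))).symm
    · ext x
      exact (I.act_map (g : b ⟶ c) x (f : K.obj (op a, b))).symm
    · exact I.Y.map_comp (f : a ⟶ b) (g : b ⟶ c)

def toColl : ProfInstance K ⥤ (Coll K ⥤ Type u) where
  obj I := toCollObj K I
  map {I J} μ :=
    { app := fun a => match a with
        | .inl c => μ.1.1.app c
        | .inr d => μ.1.2.app d
      naturality := fun {a b} f => by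
        rcases a with a | a <;> rcases b with b | b <;> try exact (f : PEmpty).elim
        · exact μ.1.1.naturality (f : a ⟶ b)
        · ext x
          exact μ.2 x (f : K.obj (op a, b))
        · exact μ.1.2.naturality (f : a ⟶ b) }
  map_id I := by
    ext a
    cases a <;> rfl
  map_comp f g := by
    ext a
    cases a <;> rfl

def fromColl : (Coll K ⥤ Type u) ⥤ ProfInstance K where
  obj G :=
    { X := collInl K ⋙ G
      Y := collInr K ⋙ G
      act := fun {c d} x k => G.map (collUp K k) x
      act_map := fun {c d d'} g x k =>
        (FunctorToTypes.map_comp_apply G (collUp K k) (collR K g) x).symm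
      map_act := fun {c c' d} f x k =>
        (FunctorToTypes.map_comp_apply G (collL K f) (collUp K k) x).symm }
  map {G G'} η := ⟨(Functor.whiskerLeft (collInl K) η, Functor.whiskerLeft (collInr K) η),
    fun {c d} x k => ConcreteCategory.congr_hom (η.naturality (collUp K k)) x⟩
  map_id _ := rfl
  map_comp _ _ := rfl

def collEquiv : ProfInstance K ≌ (Coll K ⥤ Type u) :=
  CategoryTheory.Equivalence.mk (toColl K) (fromColl K)
    (NatIso.ofComponents
      (fun I =>
        { hom := ⟨({ app := fun c => 𝟙 _, naturality := by intros; rfl },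
            { app := fun d => 𝟙 _, naturality := by intros; rfl }), fun _ _ => rfl⟩
          inv := ⟨({ app := fun c => 𝟙 _, naturality := by intros; rfl },
            { app := fun d => 𝟙 _, naturality := by intros; rfl }), fun _ _ => rfl⟩
          hom_inv_id := rfl
          inv_hom_id := rfl })
      (fun _ => rfl))
    (NatIso.ofComponents
      (fun G =>
        NatIso.ofComponents
          (fun a => match a with
            | .inl c => Iso.refl (G.obj (Coll.inl c))
            | .inr d => Iso.refl (G.obj (Coll.inr d)))
          (fun {a b} f => by
            rcases a with a | a <;> rcases b with b | b <;>
              first | exact (f : PEmpty).elim | rfl))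
      (fun {G G'} η => by
        ext a
        rcases a with a | a <;> rfl))

section CollMap

variable {K} (L : C'ᵒᵖ × D' ⥤ Type u) (F : C ⥤ C') (H : D ⥤ D')
  (ψ : ∀ (c : C) (d : D), K.obj (op c, d) → L.obj (op (F.obj c), H.obj d))
  (hψ : ∀ {c₂ c₁ : C} {d₁ d₂ : D} (f : c₂ ⟶ c₁) (g : d₁ ⟶ d₂) (k : K.obj (op c₁, d₁)),
    ψ c₂ d₂ (K.map (f.op, g) k) = L.map ((F.map f).op, H.map g) (ψ c₁ d₁ k))

/-- The functor between collages induced by a strict morphism of profunctors. -/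
def collMap : Coll K ⥤ Coll L where
  obj a := match a with
    | .inl c => Coll.inl (F.obj c)
    | .inr d => Coll.inr (H.obj d)
  map {a b} f := match a, b, f with
    | .inl c, .inl c', f => collL L (F.map (f : c ⟶ c'))
    | .inl c, .inr d, k => collUp L (ψ c d (k : K.obj (op c, d)))
    | .inr _, .inl _, f => (f : PEmpty).elim
    | .inr d, .inr d', g => collR L (H.map (g : d ⟶ d'))
  map_id a := by
    cases a
    · exact F.map_id _
    · exact H.map_id _
  map_comp {a b c} f g := by
    rcases a with a | a <;> rcases b with b | b <;> rcases c with c | c <;> first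
      | exact (f : PEmpty).elim | exact (g : PEmpty).elim | skip
    · exact F.map_comp (f : a ⟶ b) (g : b ⟶ c)
    · show ψ a c (Kmap K (f : a ⟶ b) (𝟙 c) (g : K.obj (op b, c))) =
        Kmap L (F.map (f : a ⟶ b)) (𝟙 (H.obj c)) (ψ b c g)
      rw [hψ (f : a ⟶ b) (𝟙 c) g, H.map_id]
    · show ψ a c (Kmap K (𝟙 a) (g : b ⟶ c) (f : K.obj (op a, b))) =
        Kmap L (𝟙 (F.obj a)) (H.map (g : b ⟶ c)) (ψ a b f)
      rw [hψ (𝟙 a) (g : b ⟶ c) f, F.map_id]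
    · exact H.map_comp (f : a ⟶ b) (g : b ⟶ c)

end CollMap

end CollageAux

open CollageAux in
/-- The restriction functor is isomorphic to the conjugate of precomposition with the collage
functor. -/
def restrictProfInstanceIso (K : Cᵒᵖ × D ⥤ Type u) (L : C'ᵒᵖ × D' ⥤ Type u)
    (F : C ⥤ C') (H : D ⥤ D')
    (ψ : ∀ (c : C) (d : D), K.obj (op c, d) → L.obj (op (F.obj c), H.obj d))
    (hψ : ∀ {c₂ c₁ : C} {d₁ d₂ : D} (f : c₂ ⟶ c₁) (g : d₁ ⟶ d₂) (k : K.obj (op c₁, d₁)),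
      ψ c₂ d₂ (K.map (f.op, g) k) = L.map ((F.map f).op, H.map g) (ψ c₁ d₁ k)) :
    restrictProfInstance K L F H ψ @hψ ≅
      (collEquiv L).functor ⋙
        (Functor.whiskeringLeft (Coll K) (Coll L) (Type u)).obj (collMap L F H ψ @hψ) ⋙
        (collEquiv K).inverse :=
  NatIso.ofComponents
    (fun I =>
      { hom := ⟨({ app := fun c => 𝟙 _, naturality := by intros; rfl },
          { app := fun d => 𝟙 _, naturality := by intros; rfl }), fun _ _ => rfl⟩
        inv := ⟨({ app := fun c => 𝟙 _, naturality := by intros; rfl },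
          { app := fun d => 𝟙 _, naturality := by intros; rfl }), fun _ _ => rfl⟩
        hom_inv_id := rfl
        inv_hom_id := rfl })
    (fun _ => rfl)

/-- The restriction functor between instance categories induced by a strict morphism of
profunctors admits both a left adjoint and a right adjoint. -/
theorem restrictProfInstance_isRightAdjoint_isLeftAdjoint
    (K : Cᵒᵖ × D ⥤ Type u) (L : C'ᵒᵖ × D' ⥤ Type u)
    (F : C ⥤ C') (H : D ⥤ D')
    (ψ : ∀ (c : C) (d : D), K.obj (op c, d) → L.obj (op (F.obj c), H.obj d))
    (hψ : ∀ {c₂ c₁ : C} {d₁ d₂ : D} (f : c₂ ⟶ c₁) (g : d₁ ⟶ d₂) (k : K.obj (op c₁, d₁)),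
      ψ c₂ d₂ (K.map (f.op, g) k) = L.map ((F.map f).op, H.map g) (ψ c₁ d₁ k)) :
    (restrictProfInstance K L F H ψ @hψ).IsRightAdjoint ∧
    (restrictProfInstance K L F H ψ @hψ).IsLeftAdjoint := by
  open CollageAux in
  haveI h1 : ((Functor.whiskeringLeft (Coll K) (Coll L) (Type u)).obj
      (collMap L F H ψ @hψ)).IsRightAdjoint :=
    ⟨⟨_, ⟨Functor.lanAdjunction (collMap L F H ψ @hψ) (Type u)⟩⟩⟩
  haveI h2 : ((Functor.whiskeringLeft (Coll K) (Coll L) (Type u)).obj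
      (collMap L F H ψ @hψ)).IsLeftAdjoint :=
    ⟨⟨_, ⟨Functor.ranAdjunction (collMap L F H ψ @hψ) (Type u)⟩⟩⟩
  exact ⟨Functor.isRightAdjoint_of_iso (restrictProfInstanceIso K L F H ψ @hψ).symm,
    Functor.isLeftAdjoint_of_iso (restrictProfInstanceIso K L F H ψ @hψ).symm⟩
end
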